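/- arXiv:2107.08556 — 11 statements merged into one kernel-verified Lean document; each statement's English description precedes it below -/
import Mathlib

section
/- Let E be a finite set and R ⊆ 2^E × 2^E an equivalence relation on 2^E. Then R is the cospanning relation of a violator space on E (i.e., there exists an operator φ : 2^E → 2^E satisfying extensivity and self-convexity such that (X, Y) ∈ R iff φ(X) = φ(Y)) if and only if R satisfies, for all X, Y, Z ⊆ E: (R1) if (X, Y) ∈ R then (X, X ∪ Y) ∈ R; and (R2) if X ⊆ Y ⊆ Z and (X, Z) ∈ R then (X, Y) ∈ R. -/
/-- An operator is extensive if `X ⊆ φ X` for all `X`. -/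
def Extensive {E : Type*} (φ : Set E → Set E) : Prop := ∀ X, X ⊆ φ X

/-- An operator is self-convex if `X ⊆ Y ⊆ φ X` implies `φ X = φ Y`. -/
def SelfConvex {E : Type*} (φ : Set E → Set E) : Prop :=
  ∀ X Y, X ⊆ Y → Y ⊆ φ X → φ X = φ Y

theorem stmt2 {E : Type*} [Fintype E] (R : Set E → Set E → Prop) (hR : Equivalence R) :
    (∃ φ : Set E → Set E, Extensive φ ∧ SelfConvex φ ∧ ∀ X Y, R X Y ↔ φ X = φ Y) ↔
      ((∀ X Y : Set E, R X Y → R X (X ∪ Y)) ∧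
       (∀ X Y Z : Set E, X ⊆ Y → Y ⊆ Z → R X Z → R X Y)) := by
  constructor
  · rintro ⟨φ, hext, hsc, hco⟩
    constructor
    · intro X Y hXY
      rw [hco] at hXY ⊢
      exact hsc X (X ∪ Y) Set.subset_union_left
        (Set.union_subset (hext X) (hXY ▸ hext Y))
    · intro X Y Z hXY hYZ hXZ
      rw [hco] at hXZ ⊢
      exact hsc X Y hXY (hYZ.trans (hXZ ▸ hext Z))
  · rintro ⟨h1, h2⟩
    classical
    set φ : Set E → Set E := fun X => ⋃₀ {Y | R X Y} with hφ
    -- classes are equal under R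
    have hclass : ∀ X Y, R X Y → {Z | R X Z} = {Z | R Y Z} := by
      intro X Y hXY
      ext Z
      exact ⟨fun h => hR.trans (hR.symm hXY) h, fun h => hR.trans hXY h⟩
    -- finite union of class members is related
    have hfin : ∀ (X : Set E) (s : Finset (Set E)),
        (∀ A ∈ s, R X A) → R X (X ∪ ⋃₀ ↑s) := by
      intro X s
      induction s using Finset.induction_on with
      | empty => intro _; simpa using hR.refl X
      | @insert A s hA ih =>
          intro h
          have hB : R X (X ∪ ⋃₀ ↑s) := ih fun B hB => h B (Finset.mem_insert_of_mem hB)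
          have hXA : R X A := h A (Finset.mem_insert_self A s)
          have hBA : R (X ∪ ⋃₀ ↑s) A := hR.trans (hR.symm hB) hXA
          have := hR.trans hB (h1 _ _ hBA)
          have heq : (X ∪ ⋃₀ ↑s) ∪ A = X ∪ ⋃₀ ↑(insert A s) := by
            push_cast [Set.sUnion_insert]
            ext x; simp [or_comm, or_left_comm]
          rwa [heq] at this
    have hkey : ∀ X, R X (φ X) := by
      intro X
      have hFin : {Y | R X Y}.Finite := Set.toFinite _
      have h := hfin X hFin.toFinset (fun A hA => (hFin.mem_toFinset.mp hA))
      rw [hFin.coe_toFinset] at h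
      have : X ∪ ⋃₀ {Y | R X Y} = φ X := by
        rw [hφ]
        exact Set.union_eq_self_of_subset_left (Set.subset_sUnion_of_mem (hR.refl X))
      rwa [this] at h
    have hphieq : ∀ X Y, R X Y → φ X = φ Y := by
      intro X Y hXY
      simp only [hφ]
      rw [hclass X Y hXY]
    refine ⟨φ, fun X => Set.subset_sUnion_of_mem (hR.refl X), ?_, ?_⟩
    · intro X Y hXY hY
      exact hphieq X Y (h2 X Y (φ X) hXY hY (hkey X))
    · intro X Y
      refine ⟨hphieq X Y, fun h => ?_⟩
      exact hR.trans (hkey X) (h ▸ hR.symm (hkey Y))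
end

section
/- Let E be a finite set and R ⊆ 2^E × 2^E an equivalence relation on 2^E. Then R is the cospanning relation of a co-violator space on E (i.e., there exists an operator c : 2^E → 2^E satisfying c(X) ⊆ X for all X and the property that c(X) ⊆ Y ⊆ X implies c(X) = c(Y), such that (X, Y) ∈ R iff c(X) = c(Y)) if and only if R satisfies, for all X, Y, Z ⊆ E: (R3) if (X, Y) ∈ R then (X, X ∩ Y) ∈ R; and (R2) if X ⊆ Y ⊆ Z and (X, Z) ∈ R then (X, Y) ∈ R. -/
theorem sInter_mem_of_inter_closed {α : Type*} {S : Set (Set α)} (hfin : S.Finite)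
    (hne : S.Nonempty) (hcl : ∀ A ∈ S, ∀ B ∈ S, A ∩ B ∈ S) : ⋂₀ S ∈ S := by
  classical
  obtain ⟨a, ha⟩ := hne
  have : ⋂₀ S = hfin.toFinset.inf' ⟨a, hfin.mem_toFinset.mpr ha⟩ id := by
    apply subset_antisymm
    · apply Finset.le_inf'
      intro b hb
      exact Set.sInter_subset_of_mem (hfin.mem_toFinset.mp hb)
    · intro x hx
      rw [Set.mem_sInter]
      intro t ht
      have := Finset.inf'_le (f := id) (b := t) (hfin.mem_toFinset.mpr ht)
      exact this hx
  rw [this]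
  exact Finset.inf'_mem S (fun x hx y hy => hcl x hx y hy) _ _ id
    (fun i hi => hfin.mem_toFinset.mp hi)

theorem stmt3 {E : Type*} [Fintype E] (R : Set E → Set E → Prop) (hR : Equivalence R) :
    (∃ c : Set E → Set E, (∀ X, c X ⊆ X) ∧ (∀ X Y, c X ⊆ Y → Y ⊆ X → c X = c Y) ∧
        ∀ X Y, R X Y ↔ c X = c Y) ↔
      ((∀ X Y : Set E, R X Y → R X (X ∩ Y)) ∧
       (∀ X Y Z : Set E, X ⊆ Y → Y ⊆ Z → R X Z → R X Y)) := by
  constructor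
  · rintro ⟨c, h1, h2, h3⟩
    constructor
    · intro X Y hXY
      rw [h3] at hXY ⊢
      exact h2 X (X ∩ Y) (Set.subset_inter (h1 X) (hXY ▸ h1 Y)) Set.inter_subset_left
    · intro X Y Z hXY hYZ hXZ
      rw [h3] at hXZ ⊢
      rw [hXZ]
      exact h2 Z Y (hXZ ▸ (h1 X).trans hXY) hYZ
  · rintro ⟨h3, h2⟩
    set c : Set E → Set E := fun X => ⋂₀ {Y | R X Y} with hc
    have hclass : ∀ X, R X (c X) := by
      intro X
      apply sInter_mem_of_inter_closed (Set.toFinite _) ⟨X, hR.refl X⟩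
      intro A hA B hB
      exact hR.trans hA (h3 A B (hR.trans (hR.symm hA) hB))
    have hmem : ∀ X Y, R X Y → c X = c Y := by
      intro X Y hXY
      have : {Z | R X Z} = {Z | R Y Z} := by
        ext Z; exact ⟨fun h => hR.trans (hR.symm hXY) h, fun h => hR.trans hXY h⟩
      simp only [hc, this]
    have hsub : ∀ X, c X ⊆ X := fun X => Set.sInter_subset_of_mem (hR.refl X)
    refine ⟨c, hsub, ?_, ?_⟩
    · intro X Y hcXY hYX
      apply hmem
      exact hR.trans (hclass X) (h2 (c X) Y X hcXY hYX (hR.symm (hclass X)))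
    · intro X Y
      refine ⟨hmem X Y, fun h => ?_⟩
      exact hR.trans (hclass X) (h ▸ hR.symm (hclass Y))
end

section
/- Let E be a finite set and R an equivalence relation on 2^E satisfying (R1) (X, Y) ∈ R implies (X, X ∪ Y) ∈ R, and (R2) X ⊆ Y ⊆ Z and (X, Z) ∈ R imply (X, Y) ∈ R. Then R satisfies (R3): (X, Y) ∈ R implies (X, X ∩ Y) ∈ R, if and only if R satisfies (R33): for all X ⊆ E and distinct p, q ∉ X, if (X, X ∪ {p}) ∉ R, (X, X ∪ {q}) ∉ R, and (X ∪ {p}, X ∪ {p, q}) ∈ R, then (X ∪ {q}, X ∪ {p, q}) ∉ R. -/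
theorem stmt6 {E : Type*} [Fintype E] (R : Set E → Set E → Prop) (hR : Equivalence R)
    (hR1 : ∀ X Y : Set E, R X Y → R X (X ∪ Y))
    (hR2 : ∀ X Y Z : Set E, X ⊆ Y → Y ⊆ Z → R X Z → R X Y) :
    (∀ X Y : Set E, R X Y → R X (X ∩ Y)) ↔
      (∀ (X : Set E) (p q : E), p ≠ q → p ∉ X → q ∉ X →
        ¬ R X (insert p X) → ¬ R X (insert q X) →
        R (insert p X) (insert p (insert q X)) →
        ¬ R (insert q X) (insert p (insert q X))) := by
  constructor
  · intro h3 X p q hpq hp hq hXp hXq hRp hRq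
    have h1 : R (insert p X) (insert q X) := hR.trans hRp (hR.symm hRq)
    have h2 : R (insert p X) (insert p X ∩ insert q X) := h3 _ _ h1
    have heq : insert p X ∩ insert q X = X := by
      ext x
      simp only [Set.mem_inter_iff, Set.mem_insert_iff]
      constructor
      · rintro ⟨h1' | h1', h2' | h2'⟩
        · exact absurd (h1'.symm.trans h2') hpq
        · exact h2'
        · exact h1'
        · exact h1'
      · exact fun h => ⟨Or.inr h, Or.inr h⟩
    rw [heq] at h2
    exact hXp (hR.symm h2)
  · intro h33 X Y hXY
    -- exchange lemma derived from R33
    have exch : ∀ (W : Set E) (p q : E), p ≠ q → p ∉ W → q ∉ W →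
        R (insert p W) (insert p (insert q W)) →
        R (insert q W) (insert p (insert q W)) → R W (insert p W) := by
      intro W p q hpq hp hq h1 h2
      by_contra hc
      by_cases hc2 : R W (insert q W)
      · have : R W (insert p (insert q W)) := hR.trans hc2 h2
        exact hc (hR2 W (insert p W) (insert p (insert q W))
          (Set.subset_insert _ _)
          (Set.insert_subset_insert (Set.subset_insert _ _)) this)
      · have := h33 W q p hpq.symm hq hp hc2 hc
        rw [Set.insert_comm] at this
        exact this h2 h1
    -- Lemma D : if Z\{p} ~ Z and X ~ Z with p ∈ X ⊆ Z, then X\{p} ~ X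
    have lemD : ∀ (n : ℕ) (Z X : Set E) (p : E), X ⊆ Z → p ∈ X →
        R (Z \ {p}) Z → R X Z → (Z \ X).ncard = n → R (X \ {p}) X := by
      intro n
      induction n using Nat.strong_induction_on with
      | _ n ih =>
        intro Z X p hXZ hpX hZp hXR hcard
        by_cases hZX : Z ⊆ X
        · have hEq : X = Z := Set.Subset.antisymm hXZ hZX
          subst hEq
          exact hZp
        · obtain ⟨q, hqZ, hqX⟩ := Set.not_subset.mp hZX
          have hpq : p ≠ q := fun h => hqX (h ▸ hpX)
          have hX'Z : insert q X ⊆ Z := Set.insert_subset hqZ hXZ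
          have hXX' : R X (insert q X) :=
            hR2 X (insert q X) Z (Set.subset_insert _ _) hX'Z hXR
          have hRX' : R (insert q X) Z := hR.trans (hR.symm hXX') hXR
          have hlt : (Z \ insert q X).ncard < n := by
            rw [← hcard]
            apply Set.ncard_lt_ncard _ (Set.toFinite _)
            constructor
            · exact Set.diff_subset_diff_right (Set.subset_insert _ _)
            · intro hsub
              have : q ∈ Z \ insert q X := hsub ⟨hqZ, hqX⟩
              exact this.2 (Set.mem_insert _ _)
          have hIH : R (insert q X \ {p}) (insert q X) :=
            ih _ hlt Z (insert q X) p hX'Z (Set.mem_insert_of_mem _ hpX) hZp hRX' rfl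
          -- apply exchange with B = X \ {p}
          have hB1 : insert p (X \ {p}) = X := by
            rw [Set.insert_diff_singleton, Set.insert_eq_self.mpr hpX]
          have hB2 : insert q (X \ {p}) = insert q X \ {p} :=
            Set.insert_diff_singleton_comm hpq.symm X
          have hB3 : insert p (insert q (X \ {p})) = insert q X := by
            rw [Set.insert_comm, hB1]
          have := exch (X \ {p}) p q hpq (by simp) (fun h => hqX h.1)
            (by rw [hB3, hB1]; exact hXX')
            (by rw [hB3, hB2]; exact hIH)
          rwa [hB1] at this
    -- Lemma M : X ~ Z, Y ~ Z with X, Y ⊆ Z implies X ∩ Y ~ Z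
    have lemM : ∀ (n : ℕ) (Z X Y : Set E), X ⊆ Z → Y ⊆ Z → R X Z → R Y Z →
        (X \ Y).ncard = n → R (X ∩ Y) Z := by
      intro n
      induction n using Nat.strong_induction_on with
      | _ n ih =>
        intro Z X Y hXZ hYZ hX hY hcard
        by_cases hXY : X ⊆ Y
        · rw [Set.inter_eq_self_of_subset_left hXY]; exact hX
        · obtain ⟨p, hpX, hpY⟩ := Set.not_subset.mp hXY
          have hZp : R (Z \ {p}) Z := by
            have h1 : Y ⊆ Z \ {p} := Set.subset_diff_singleton hYZ hpY
            have h2 : R Y (Z \ {p}) := hR2 _ _ _ h1 Set.diff_subset hY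
            exact hR.trans (hR.symm h2) hY
          have hD : R (X \ {p}) X := lemD _ Z X p hXZ hpX hZp hX rfl
          have hX' : R (X \ {p}) Z := hR.trans hD hX
          have hlt : ((X \ {p}) \ Y).ncard < n := by
            rw [← hcard]
            apply Set.ncard_lt_ncard _ (Set.toFinite _)
            constructor
            · exact Set.diff_subset_diff_left Set.diff_subset
            · intro hsub
              have : p ∈ (X \ {p}) \ Y := hsub ⟨hpX, hpY⟩
              exact this.1.2 rfl
          have hM := ih _ hlt Z (X \ {p}) Y (Set.diff_subset.trans hXZ) hYZ hX' hY rfl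
          have heq : (X \ {p}) ∩ Y = X ∩ Y := by
            ext x
            simp only [Set.mem_inter_iff, Set.mem_diff, Set.mem_singleton_iff]
            constructor
            · rintro ⟨⟨h1, _⟩, h2⟩; exact ⟨h1, h2⟩
            · rintro ⟨h1, h2⟩; exact ⟨⟨h1, fun h => hpY (h ▸ h2)⟩, h2⟩
          rwa [heq] at hM
    have hXu : R X (X ∪ Y) := hR1 X Y hXY
    have hYu : R Y (X ∪ Y) := by
      have := hR1 Y X (hR.symm hXY)
      rwa [Set.union_comm] at this
    have := lemM _ (X ∪ Y) X Y Set.subset_union_left Set.subset_union_right hXu hYu rfl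
    exact hR.trans hXu (hR.symm this)
end

section
/- Let (E, φ) be a violator space and for X ⊆ E let ex(X) = {x ∈ X : x ∉ φ(X \ {x})} be its set of extreme points. Then the following are equivalent: (i) (E, φ) is uniquely generated (every X ⊆ E has a unique inclusion-minimal set B with φ(B) = φ(X)); (ii) for all X, Y ⊆ E, ex(X) ⊆ Y ⊆ X implies ex(X) = ex(Y); (iii) φ(ex(X)) = φ(X) for all X ⊆ E; (iv) ex(φ(X)) = ex(X) for all X ⊆ E. -/
/-- `B` is a basis of `X`: an inclusion-minimal set with `φ B = φ X`. -/
def IsBasis {E : Type*} (φ : Set E → Set E) (B X : Set E) : Prop :=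
  φ B = φ X ∧ ∀ C, C ⊂ B → φ C ≠ φ X

/-- A space is uniquely generated if every set has a unique basis. -/
def UniquelyGenerated {E : Type*} (φ : Set E → Set E) : Prop :=
  ∀ X : Set E, ∃! B, IsBasis φ B X

/-- The set of extreme points of `X` with respect to `φ`. -/
def extremePoints {E : Type*} (φ : Set E → Set E) (X : Set E) : Set E :=
  {x ∈ X | x ∉ φ (X \ {x})}

section Aux

variable {E : Type*} (φ : Set E → Set E)

lemma ex_subset (X : Set E) : extremePoints φ X ⊆ X := fun _ hx => hx.1

lemma phi_diff (hext : Extensive φ) (hsc : SelfConvex φ) (X : Set E) (x : E)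
    (hx : x ∈ X) (h : x ∈ φ (X \ {x})) : φ (X \ {x}) = φ X := by
  refine hsc (X \ {x}) X Set.diff_subset ?_
  intro y hy
  by_cases hyx : y = x
  · subst hyx; exact h
  · exact hext _ ⟨hy, hyx⟩

/-- Every extreme point of `X` lies in every generator of `X` contained in `X`. -/
lemma exX_subset_gen (hext : Extensive φ) (hsc : SelfConvex φ) (B X : Set E)
    (hBX : B ⊆ X) (hgen : φ B = φ X) : extremePoints φ X ⊆ B := by
  intro x hx
  by_contra hxB
  have hBsub : B ⊆ X \ {x} := fun z hz => ⟨hBX hz, fun h => hxB (h ▸ hz)⟩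
  have hsub2 : X \ {x} ⊆ φ B := by
    rw [hgen]; exact fun z hz => hext X hz.1
  have heq := hsc B (X \ {x}) hBsub hsub2
  have hxφ : x ∈ φ (X \ {x}) := by rw [← heq, hgen]; exact hext X hx.1
  exact hx.2 hxφ

lemma ex_phi_subset (hext : Extensive φ) (hsc : SelfConvex φ) (X : Set E) :
    extremePoints φ (φ X) ⊆ X := by
  intro x hx
  by_contra hxX
  have hsub : X ⊆ φ X \ {x} := fun z hz => ⟨hext X hz, fun h => hxX (h ▸ hz)⟩
  have heq := hsc X (φ X \ {x}) hsub (fun z hz => hz.1)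
  exact hx.2 (heq ▸ hx.1)

lemma ex_anti (hext : Extensive φ) (hsc : SelfConvex φ) (Y X : Set E)
    (hYX : Y ⊆ X) (hgen : φ Y = φ X) : extremePoints φ X ⊆ extremePoints φ Y := by
  intro x hx
  have hxY : x ∈ Y := exX_subset_gen φ hext hsc Y X hYX hgen hx
  refine ⟨hxY, ?_⟩
  intro hxφY
  have h1 : φ (Y \ {x}) = φ Y := phi_diff φ hext hsc Y x hxY hxφY
  have h2 : φ (Y \ {x}) = φ (X \ {x}) := by
    refine hsc (Y \ {x}) (X \ {x}) (Set.diff_subset_diff_left hYX) ?_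
    rw [h1, hgen]
    exact fun z hz => hext X hz.1
  exact hx.2 (h2 ▸ hxφY)

/-- Existence of a minimal subset satisfying a property. -/
lemma exists_min_aux {E : Type*} [Fintype E] (P : Set E → Prop) :
    ∀ (n : ℕ) (X : Set E), X.ncard ≤ n → P X →
      ∃ B, B ⊆ X ∧ P B ∧ ∀ C, C ⊂ B → ¬ P C := by
  intro n
  induction n with
  | zero =>
    intro X hc hX
    refine ⟨X, subset_rfl, hX, ?_⟩
    intro C hC _
    have := Set.ncard_lt_ncard hC (Set.toFinite X)
    omega
  | succ n ih =>
    intro X hc hX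
    by_cases h : ∃ C, C ⊂ X ∧ P C
    · obtain ⟨C, hCX, hPC⟩ := h
      have hcc : C.ncard ≤ n := by
        have := Set.ncard_lt_ncard hCX (Set.toFinite X)
        omega
      obtain ⟨B, hBC, hPB, hmin⟩ := ih C hcc hPC
      exact ⟨B, hBC.trans hCX.subset, hPB, hmin⟩
    · push_neg at h
      exact ⟨X, subset_rfl, hX, fun C hC => h C hC⟩

lemma exists_min {E : Type*} [Fintype E] (P : Set E → Prop) (X : Set E) (hX : P X) :
    ∃ B, B ⊆ X ∧ P B ∧ ∀ C, C ⊂ B → ¬ P C :=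
  exists_min_aux P X.ncard X le_rfl hX

lemma imp13 {E : Type*} [Fintype E] (φ : Set E → Set E)
    (hext : Extensive φ) (hsc : SelfConvex φ) (h1 : UniquelyGenerated φ) :
    ∀ X : Set E, φ (extremePoints φ X) = φ X := by
  intro X
  obtain ⟨B, hBX, hBφ, hBmin⟩ := exists_min (fun B => φ B = φ X) X rfl
  have hBbasis : IsBasis φ B X := ⟨hBφ, hBmin⟩
  have hgoal : extremePoints φ X = B := by
    refine Set.Subset.antisymm (exX_subset_gen φ hext hsc B X hBX hBφ) ?_
    intro b hbB
    by_contra hbex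
    have hbX : b ∈ X := hBX hbB
    have hbφ : b ∈ φ (X \ {b}) := by
      by_contra h; exact hbex ⟨hbX, h⟩
    have heq : φ (X \ {b}) = φ X := phi_diff φ hext hsc X b hbX hbφ
    obtain ⟨B', hB'sub, hB'φ, hB'min⟩ :=
      exists_min (fun B => φ B = φ (X \ {b})) (X \ {b}) rfl
    have hB'basis : IsBasis φ B' X := by
      refine ⟨by rw [hB'φ, heq], ?_⟩
      intro C hC hCeq
      exact hB'min C hC (by rw [hCeq, heq])
    obtain ⟨Bu, _, huniq⟩ := h1 X
    have e : B = B' := (huniq B hBbasis).trans (huniq B' hB'basis).symm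
    have : b ∈ X \ {b} := hB'sub (e ▸ hbB)
    exact this.2 rfl
  rw [hgoal, hBφ]

lemma imp32 {E : Type*} (φ : Set E → Set E)
    (hext : Extensive φ) (hsc : SelfConvex φ)
    (h3 : ∀ X : Set E, φ (extremePoints φ X) = φ X) :
    ∀ X Y : Set E, extremePoints φ X ⊆ Y → Y ⊆ X →
      extremePoints φ X = extremePoints φ Y := by
  intro X Y hXY hYX
  have hYφ : Y ⊆ φ (extremePoints φ X) := by
    rw [h3 X]; exact fun y hy => hext X (hYX hy)
  have hφY : φ Y = φ X := ((hsc _ Y hXY hYφ).symm).trans (h3 X)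
  refine Set.Subset.antisymm (ex_anti φ hext hsc Y X hYX hφY) ?_
  intro y hy
  by_contra hyX
  have hsub : extremePoints φ X ⊆ Y \ {y} :=
    fun z hz => ⟨hXY hz, fun h => hyX (h ▸ hz)⟩
  have hs1 : Y \ {y} ⊆ φ (extremePoints φ X) := by
    rw [h3 X]; exact fun z hz => hext X (hYX hz.1)
  have h2 := hsc _ _ hsub hs1
  have : y ∈ φ (Y \ {y}) := by
    rw [← h2, h3 X, ← hφY]; exact hext Y hy.1
  exact hy.2 this

lemma imp24 {E : Type*} (φ : Set E → Set E)
    (hext : Extensive φ) (hsc : SelfConvex φ)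
    (h2 : ∀ X Y : Set E, extremePoints φ X ⊆ Y → Y ⊆ X →
      extremePoints φ X = extremePoints φ Y) :
    ∀ X : Set E, extremePoints φ (φ X) = extremePoints φ X :=
  fun X => h2 (φ X) X (ex_phi_subset φ hext hsc X) (hext X)

lemma imp43_aux {E : Type*} [Fintype E] (φ : Set E → Set E)
    (hext : Extensive φ) (hsc : SelfConvex φ)
    (h4 : ∀ X : Set E, extremePoints φ (φ X) = extremePoints φ X) :
    ∀ (n : ℕ) (X : Set E), X.ncard ≤ n → φ (extremePoints φ X) = φ X := by
  intro n
  induction n with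
  | zero =>
    intro X hc
    have hX : X = ∅ := (Set.ncard_eq_zero (Set.toFinite X)).mp (Nat.le_zero.mp hc)
    subst hX
    have hex : extremePoints φ (∅ : Set E) = ∅ :=
      Set.eq_empty_of_subset_empty (ex_subset φ ∅)
    rw [hex]
  | succ n ih =>
    intro X hc
    by_cases hcase : extremePoints φ X = X
    · rw [hcase]
    · have hy : ∃ y, y ∈ X ∧ y ∉ extremePoints φ X := by
        by_contra h
        push_neg at h
        exact hcase (Set.Subset.antisymm (ex_subset φ X) h)
      obtain ⟨y, hyX, hyex⟩ := hy
      have hyφ : y ∈ φ (X \ {y}) := by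
        by_contra h; exact hyex ⟨hyX, h⟩
      have heq : φ (X \ {y}) = φ X := phi_diff φ hext hsc X y hyX hyφ
      have hexeq : extremePoints φ X = extremePoints φ (X \ {y}) := by
        rw [← h4 X, ← h4 (X \ {y}), heq]
      have hcard : (X \ {y}).ncard ≤ n := by
        have hss : X \ {y} ⊂ X := Set.sdiff_singleton_ssubset.mpr hyX
        have := Set.ncard_lt_ncard hss (Set.toFinite X)
        omega
      rw [hexeq, ih _ hcard, heq]

lemma imp43 {E : Type*} [Fintype E] (φ : Set E → Set E)
    (hext : Extensive φ) (hsc : SelfConvex φ)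
    (h4 : ∀ X : Set E, extremePoints φ (φ X) = extremePoints φ X) :
    ∀ X : Set E, φ (extremePoints φ X) = φ X :=
  fun X => imp43_aux φ hext hsc h4 X.ncard X le_rfl

lemma uniq_of_34 {E : Type*} [Fintype E] (φ : Set E → Set E)
    (hext : Extensive φ) (hsc : SelfConvex φ)
    (h3 : ∀ X : Set E, φ (extremePoints φ X) = φ X)
    (h4 : ∀ X : Set E, extremePoints φ (φ X) = extremePoints φ X) :
    UniquelyGenerated φ := by
  intro X
  obtain ⟨B, hBX, hBφ, hBmin⟩ := exists_min (fun B => φ B = φ X) X rfl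
  have key : ∀ C, IsBasis φ C X → C = extremePoints φ (φ X) := by
    rintro C ⟨hCφ, hCmin⟩
    have hC : extremePoints φ C = C := by
      by_contra h
      have hss : extremePoints φ C ⊂ C := (ex_subset φ C).ssubset_of_ne h
      exact hCmin _ hss (by rw [h3 C, hCφ])
    calc C = extremePoints φ C := hC.symm
      _ = extremePoints φ (φ C) := (h4 C).symm
      _ = extremePoints φ (φ X) := by rw [hCφ]
  exact ⟨B, ⟨hBφ, hBmin⟩, fun C hC => (key C hC).trans (key B ⟨hBφ, hBmin⟩).symm⟩

end Aux

theorem stmt7 {E : Type*} [Fintype E] (φ : Set E → Set E)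
    (hext : Extensive φ) (hsc : SelfConvex φ) :
    List.TFAE
      [UniquelyGenerated φ,
       ∀ X Y : Set E, extremePoints φ X ⊆ Y → Y ⊆ X → extremePoints φ X = extremePoints φ Y,
       ∀ X : Set E, φ (extremePoints φ X) = φ X,
       ∀ X : Set E, extremePoints φ (φ X) = extremePoints φ X] := by
  tfae_have 1 → 3 := imp13 φ hext hsc
  tfae_have 3 → 2 := imp32 φ hext hsc
  tfae_have 2 → 4 := imp24 φ hext hsc
  tfae_have 4 → 3 := imp43 φ hext hsc
  tfae_have 2 → 1 := fun h2 =>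
    uniq_of_34 φ hext hsc (imp43 φ hext hsc (imp24 φ hext hsc h2)) (imp24 φ hext hsc h2)
  tfae_finish
end

section
/- Let E be a finite set and P' a hypercube partition of 2^E (a partition of 2^E into intervals [A, B] = {C : A ⊆ C ⊆ B}) satisfying the accessibility property: for every interval [A, B] ∈ P' and every x ∈ A, there exists C ⊆ E such that [C, B \ {x}] ∈ P'. Let N = {B : [A, B] ∈ P' for some A}. Then for every [A, B] ∈ P' and every C ⊆ B with C ∉ [A, B], there exists x ∈ B \ C such that B \ {x} ∈ N. -/
/-- The interval `[A, B]` of sets between `A` and `B`. -/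
def SetInterval {E : Type*} (A B : Set E) : Set (Set E) := {C | A ⊆ C ∧ C ⊆ B}

/-- A hypercube partition of `2^E`, given as a collection of pairs `(A, B)` with
`A ⊆ B`, whose intervals partition `2^E`: every set lies in exactly one interval. -/
def IsHypercubePartition {E : Type*} (P : Set (Set E × Set E)) : Prop :=
  (∀ p ∈ P, p.1 ⊆ p.2) ∧
  ∀ C : Set E, ∃! p : Set E × Set E, p ∈ P ∧ C ∈ SetInterval p.1 p.2

theorem stmt10 {E : Type*} [Fintype E] (P : Set (Set E × Set E))
    (hP : IsHypercubePartition P)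
    (hacc : ∀ A B : Set E, (A, B) ∈ P → ∀ x ∈ A, ∃ C : Set E, (C, B \ {x}) ∈ P)
    (A B : Set E) (hAB : (A, B) ∈ P) (C : Set E) (hCB : C ⊆ B)
    (hC : C ∉ SetInterval A B) :
    ∃ x ∈ B \ C, ∃ A' : Set E, (A', B \ {x}) ∈ P := by
  have hnA : ¬ A ⊆ C := fun h => hC ⟨h, hCB⟩
  obtain ⟨x, hxA, hxC⟩ := Set.not_subset.mp hnA
  exact ⟨x, ⟨hP.1 (A, B) hAB hxA, hxC⟩, hacc A B hAB x hxA⟩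
end

section
/- Let E be a finite set and R an equivalence relation on 2^E. Then R is the cospanning relation of a convex geometry on E (i.e., there exists a closure operator τ on E satisfying the anti-exchange property such that (X, Y) ∈ R iff τ(X) = τ(Y)) if and only if R satisfies, for all X, Y, Z ⊆ E: (R1) (X, Y) ∈ R implies (X, X ∪ Y) ∈ R; (R2) X ⊆ Y ⊆ Z and (X, Z) ∈ R imply (X, Y) ∈ R; (R3) (X, Y) ∈ R implies (X, X ∩ Y) ∈ R; and (R4') for all x ∈ X and y ∉ X, if (X, X ∪ {z}) ∉ R for all z ∉ X and (X, X \ {x}) ∉ R, then (X \ {x}, (X \ {x}) ∪ {y}) ∉ R. -/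
/-- `τ` is a closure operator: extensive, isotone, idempotent. -/
def IsClosureOp {E : Type*} (τ : Set E → Set E) : Prop :=
  (∀ X, X ⊆ τ X) ∧ (∀ X Y, X ⊆ Y → τ X ⊆ τ Y) ∧ (∀ X, τ (τ X) = τ X)

/-- The anti-exchange property of an operator. -/
def AntiExchange {E : Type*} (τ : Set E → Set E) : Prop :=
  ∀ (X : Set E) (p q : E), p ≠ q → p ∉ τ X → q ∉ τ X →
    p ∈ τ (insert q X) → q ∉ τ (insert p X)

section AuxFwd

variable {E : Type*} [Fintype E]

/-- In a finite convex geometry, cospanning sets have cospanning intersection. -/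
lemma forward_r3 {τ : Set E → Set E} (hc : IsClosureOp τ) (hae : AntiExchange τ)
    (X Y : Set E) (h : τ X = τ Y) : τ (X ∩ Y) = τ X := by
  obtain ⟨hext, hmono, hidem⟩ := hc
  by_contra hne
  set A := τ X with hA
  set C := τ (X ∩ Y) with hC
  have hCA : C ⊆ A := hmono _ _ Set.inter_subset_left
  have hclA : τ A = A := hidem X
  -- family of proper closed subsets of A containing C
  set 𝒟 : Set (Set E) := {D | τ D = D ∧ C ⊆ D ∧ D ⊆ A ∧ D ≠ A} with h𝒟
  have hCmem : C ∈ 𝒟 := ⟨hidem _, subset_rfl, hCA, hne⟩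
  obtain ⟨D, hD, hmax⟩ : ∃ D ∈ 𝒟, ∀ D' ∈ 𝒟, id D ≤ id D' → id D = id D' := by
    obtain ⟨D, hD, h⟩ := Set.Finite.exists_maximalFor id 𝒟 (Set.toFinite _) ⟨C, hCmem⟩
    exact ⟨D, hD, fun D' h1 h2 => le_antisymm h2 (h h1 h2)⟩
  obtain ⟨hDcl, hCD, hDA, hDneA⟩ := hD
  have key : ∀ a ∈ A \ D, τ (insert a D) = A := by
    intro a ha
    by_contra hne'
    have hsub : D ⊆ τ (insert a D) := (Set.subset_insert a D).trans (hext _)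
    have hmem : τ (insert a D) ∈ 𝒟 := by
      refine ⟨hidem _, hCD.trans hsub, ?_, hne'⟩
      have : insert a D ⊆ A := Set.insert_subset ha.1 hDA
      calc τ (insert a D) ⊆ τ A := hmono _ _ this
        _ = A := hclA
    have hDe := hmax _ hmem hsub
    rw [id_eq, id_eq] at hDe
    have haD : a ∈ D := by
      rw [hDe]
      exact hext _ (Set.mem_insert a D)
    exact ha.2 haD
  have hsingle : ∀ a ∈ A \ D, ∀ b ∈ A \ D, a = b := by
    intro a ha b hb
    by_contra hab
    have hna : a ∉ τ D := by rw [hDcl]; exact ha.2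
    have hnb : b ∉ τ D := by rw [hDcl]; exact hb.2
    have h1 : a ∈ τ (insert b D) := by rw [key b hb]; exact ha.1
    have h2 : b ∈ τ (insert a D) := by rw [key a ha]; exact hb.1
    exact hae D a b hab hna hnb h1 h2
  have hADne : (A \ D).Nonempty := Set.nonempty_of_ssubset ⟨hDA, fun h => hDneA (subset_antisymm hDA h)⟩
  obtain ⟨a, ha⟩ := hADne
  have hAeq : A \ {a} ⊆ D := by
    intro w hw
    by_contra hwD
    exact hw.2 (hsingle w ⟨hw.1, hwD⟩ a ha)
  have haX : a ∈ X := by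
    by_contra haX
    have hXD : X ⊆ D := fun w hw => hAeq ⟨hext X hw, fun hwa => haX (hwa ▸ hw)⟩
    have : A ⊆ D := by
      calc A = τ X := rfl
        _ ⊆ τ D := hmono _ _ hXD
        _ = D := hDcl
    exact ha.2 (this ha.1)
  have haY : a ∈ Y := by
    by_contra haY
    have hYD : Y ⊆ D := fun w hw => hAeq ⟨h ▸ hext Y hw, fun hwa => haY (hwa ▸ hw)⟩
    have : A ⊆ D := by
      calc A = τ Y := h
        _ ⊆ τ D := hmono _ _ hYD
        _ = D := hDcl
    exact ha.2 (this ha.1)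
  exact ha.2 (hCD (hext _ ⟨haX, haY⟩))

end AuxFwd

section AuxBwd

variable {E : Type*} [Fintype E] {R : Set E → Set E → Prop}

/-- The union of the `R`-class of `X`. -/
def tauR (R : Set E → Set E → Prop) (X : Set E) : Set E := ⋃₀ {Y | R X Y}

/-- The intersection of the `R`-class of `X`. -/
def muR (R : Set E → Set E → Prop) (X : Set E) : Set E := ⋂₀ {Y | R X Y}

lemma union_mem (hR : Equivalence R) (h1 : ∀ X Y : Set E, R X Y → R X (X ∪ Y))
    {X Y Z : Set E} (hy : R X Y) (hz : R X Z) : R X (Y ∪ Z) :=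
  hR.trans hy (h1 Y Z (hR.trans (hR.symm hy) hz))

lemma inter_mem (hR : Equivalence R) (h3 : ∀ X Y : Set E, R X Y → R X (X ∩ Y))
    {X Y Z : Set E} (hy : R X Y) (hz : R X Z) : R X (Y ∩ Z) :=
  hR.trans hy (h3 Y Z (hR.trans (hR.symm hy) hz))

lemma r_tau (hR : Equivalence R) (h1 : ∀ X Y : Set E, R X Y → R X (X ∪ Y))
    (X : Set E) : R X (tauR R X) := by
  obtain ⟨D, hD, hmax⟩ : ∃ D ∈ {Y | R X Y}, ∀ D' ∈ {Y | R X Y}, id D ≤ id D' → id D = id D' := by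
    obtain ⟨D, hD, h⟩ := Set.Finite.exists_maximalFor id {Y | R X Y} (Set.toFinite _) ⟨X, hR.refl X⟩
    exact ⟨D, hD, fun D' h1 h2 => le_antisymm h2 (h h1 h2)⟩
  have hall : ∀ Y ∈ {Y | R X Y}, Y ⊆ D := by
    intro Y hy
    have h' : R X (D ∪ Y) := union_mem hR h1 hD hy
    have hDe := hmax _ h' Set.subset_union_left
    rw [id_eq, id_eq] at hDe
    rw [hDe]
    exact Set.subset_union_right
  have : tauR R X = D := subset_antisymm (Set.sUnion_subset hall)
    (Set.subset_sUnion_of_mem hD)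
  rw [this]; exact hD

lemma r_mu (hR : Equivalence R) (h3 : ∀ X Y : Set E, R X Y → R X (X ∩ Y))
    (X : Set E) : R X (muR R X) := by
  obtain ⟨D, hD, hmin⟩ : ∃ D ∈ {Y | R X Y}, ∀ D' ∈ {Y | R X Y}, id D' ≤ id D → id D = id D' := by
    obtain ⟨D, hD, h⟩ := Set.Finite.exists_minimalFor id {Y | R X Y} (Set.toFinite _) ⟨X, hR.refl X⟩
    exact ⟨D, hD, fun D' h1 h2 => le_antisymm (h h1 h2) h2⟩
  have hall : ∀ Y ∈ {Y | R X Y}, D ⊆ Y := by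
    intro Y hy
    have h' : R X (D ∩ Y) := inter_mem hR h3 hD hy
    have hDe := hmin _ h' Set.inter_subset_left
    rw [id_eq, id_eq] at hDe
    intro v hv
    rw [hDe] at hv
    exact hv.2
  have : muR R X = D := subset_antisymm (Set.sInter_subset_of_mem hD)
    (Set.subset_sInter hall)
  rw [this]; exact hD

lemma tau_eq_of_R (hR : Equivalence R) {X Y : Set E} (h : R X Y) :
    tauR R X = tauR R Y := by
  have hcls : {W | R X W} = {W | R Y W} :=
    Set.ext fun W => ⟨fun hw => hR.trans (hR.symm h) hw, fun hw => hR.trans h hw⟩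
  unfold tauR
  rw [hcls]

lemma mu_subset {X Y : Set E} (h : R X Y) : muR R X ⊆ Y :=
  Set.sInter_subset_of_mem h

lemma subset_tau {X Y : Set E} (h : R X Y) : Y ⊆ tauR R X :=
  Set.subset_sUnion_of_mem h

lemma self_subset_tau (hR : Equivalence R) (X : Set E) : X ⊆ tauR R X :=
  Set.subset_sUnion_of_mem (hR.refl X)

lemma interval_mem (hR : Equivalence R) (h1 : ∀ X Y : Set E, R X Y → R X (X ∪ Y))
    (h3 : ∀ X Y : Set E, R X Y → R X (X ∩ Y))
    (h2 : ∀ X Y Z : Set E, X ⊆ Y → Y ⊆ Z → R X Z → R X Y)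
    {X Y : Set E} (hmu : muR R X ⊆ Y) (htau : Y ⊆ tauR R X) : R X Y := by
  have hμ := r_mu hR h3 X
  have hτ := r_tau hR h1 X
  have hmt : R (muR R X) (tauR R X) := hR.trans (hR.symm hμ) hτ
  exact hR.trans hμ (h2 _ Y _ hmu htau hmt)

lemma key_mono (hR : Equivalence R) (h1 : ∀ X Y : Set E, R X Y → R X (X ∪ Y))
    (h3 : ∀ X Y : Set E, R X Y → R X (X ∩ Y))
    (h2 : ∀ X Y Z : Set E, X ⊆ Y → Y ⊆ Z → R X Z → R X Y)
    (h4 : ∀ (X : Set E) (x y : E), x ∈ X → y ∉ X →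
         (∀ z ∉ X, ¬ R X (insert z X)) → ¬ R X (X \ {x}) →
         ¬ R (X \ {x}) (insert y (X \ {x}))) :
    ∀ (n : ℕ) (C : Set E), C.ncard ≤ n → tauR R C = C →
    ∀ Z, Z ⊆ C → tauR R Z ⊆ C := by
  intro n
  induction n with
  | zero =>
    intro C hcard hcl Z hZ
    have hC : C = ∅ := (Set.ncard_eq_zero).mp (Nat.le_zero.mp hcard)
    subst hC
    have : Z = ∅ := Set.subset_eq_empty hZ rfl
    subst this
    rw [hcl]
  | succ n ih =>
    intro C hcard hcl Z hZ
    by_cases hmu : muR R C ⊆ Z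
    · have hRZ : R C Z := interval_mem hR h1 h3 h2 hmu (by rw [hcl]; exact hZ)
      rw [← tau_eq_of_R hR hRZ, hcl]
    · obtain ⟨x, hxmu, hxZ⟩ := Set.not_subset.mp hmu
      have hxC : x ∈ C := mu_subset (hR.refl C) hxmu
      have hCcond : ∀ z ∉ C, ¬ R C (insert z C) := by
        intro z hz hRz
        have : insert z C ⊆ tauR R C := subset_tau hRz
        rw [hcl] at this
        exact hz (this (Set.mem_insert z C))
      have hnotR : ¬ R C (C \ {x}) := by
        intro h
        exact (mu_subset h hxmu).2 rfl
      have hclx : tauR R (C \ {x}) = C \ {x} := by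
        refine subset_antisymm ?_ (self_subset_tau hR _)
        intro w hw
        by_cases hwC : w ∈ C
        · refine ⟨hwC, ?_⟩
          intro hwx
          have hwx' : w = x := hwx
          apply hnotR
          apply hR.symm
          apply interval_mem hR h1 h3 h2 ((mu_subset (hR.refl _)).trans Set.diff_subset)
          intro v hv
          by_cases hvx : v = x
          · subst hvx
            exact hwx' ▸ hw
          · exact self_subset_tau hR _ ⟨hv, hvx⟩
        · exfalso
          apply h4 C x w hxC hwC hCcond hnotR
          apply interval_mem hR h1 h3 h2
            (fun v hv => Set.mem_insert_of_mem _ (mu_subset (hR.refl _) hv))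
          exact Set.insert_subset hw (self_subset_tau hR _)
      have hcard' : (C \ {x}).ncard ≤ n := by
        have := Set.ncard_diff_singleton_lt_of_mem hxC
        omega
      have hZ' : Z ⊆ C \ {x} := Set.subset_diff_singleton hZ hxZ
      exact (ih (C \ {x}) hcard' hclx Z hZ').trans Set.diff_subset

end AuxBwd

theorem stmt11 {E : Type*} [Fintype E] (R : Set E → Set E → Prop) (hR : Equivalence R) :
    (∃ τ : Set E → Set E, IsClosureOp τ ∧ AntiExchange τ ∧ ∀ X Y, R X Y ↔ τ X = τ Y) ↔
      ((∀ X Y : Set E, R X Y → R X (X ∪ Y)) ∧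
       (∀ X Y Z : Set E, X ⊆ Y → Y ⊆ Z → R X Z → R X Y) ∧
       (∀ X Y : Set E, R X Y → R X (X ∩ Y)) ∧
       (∀ (X : Set E) (x y : E), x ∈ X → y ∉ X →
         (∀ z ∉ X, ¬ R X (insert z X)) → ¬ R X (X \ {x}) →
         ¬ R (X \ {x}) (insert y (X \ {x})))) := by
  constructor
  · rintro ⟨τ, hc, hae, hco⟩
    obtain ⟨hext, hmono, hidem⟩ := hc
    refine ⟨?_, ?_, ?_, ?_⟩
    · intro X Y h
      rw [hco] at h ⊢
      refine subset_antisymm (hmono _ _ Set.subset_union_left) ?_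
      have : X ∪ Y ⊆ τ X := Set.union_subset (hext X) (h ▸ hext Y)
      calc τ (X ∪ Y) ⊆ τ (τ X) := hmono _ _ this
        _ = τ X := hidem X
    · intro X Y Z hXY hYZ h
      rw [hco] at h ⊢
      exact subset_antisymm (hmono _ _ hXY) (h ▸ hmono _ _ hYZ)
    · intro X Y h
      rw [hco] at h ⊢
      exact (forward_r3 ⟨hext, hmono, hidem⟩ hae X Y h).symm
    · intro X x y hx hy hz hnx hcon
      have hclosed : τ X = X := by
        refine subset_antisymm ?_ (hext X)
        intro w hw
        by_contra hwX
        apply hz w hwX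
        rw [hco]
        refine subset_antisymm (hmono _ _ (Set.subset_insert w X)) ?_
        have : insert w X ⊆ τ X := Set.insert_subset hw (hext X)
        calc τ (insert w X) ⊆ τ (τ X) := hmono _ _ this
          _ = τ X := hidem X
      rw [hco] at hcon
      have hyτ : y ∈ τ (X \ {x}) := hcon ▸ hext _ (Set.mem_insert y _)
      have h5 : τ (X \ {x}) ⊆ τ X := hmono _ _ Set.diff_subset
      rw [hclosed] at h5
      have : τ (X \ {x}) ⊆ X := h5
      exact hy (this hyτ)
  · rintro ⟨h1, h2, h3, h4⟩
    refine ⟨tauR R, ⟨self_subset_tau hR, ?_, ?_⟩, ?_, ?_⟩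
    · intro X Y hXY
      have hcl : tauR R (tauR R Y) = tauR R Y := (tau_eq_of_R hR (r_tau hR h1 Y)).symm
      exact key_mono hR h1 h3 h2 h4 ((tauR R Y).ncard) _ le_rfl hcl X
        (hXY.trans (self_subset_tau hR Y))
    · intro X
      exact (tau_eq_of_R hR (r_tau hR h1 X)).symm
    · intro X p q hpq hpX hqX hpmem hqmem
      have hDeq : tauR R (insert p X) = tauR R (insert q X) := by
        refine subset_antisymm ?_ ?_
        · apply key_mono hR h1 h3 h2 h4 ((tauR R (insert q X)).ncard) _ le_rfl
            ((tau_eq_of_R hR (r_tau hR h1 (insert q X))).symm)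
          exact Set.insert_subset hpmem ((Set.subset_insert q X).trans (self_subset_tau hR _))
        · apply key_mono hR h1 h3 h2 h4 ((tauR R (insert p X)).ncard) _ le_rfl
            ((tau_eq_of_R hR (r_tau hR h1 (insert p X))).symm)
          exact Set.insert_subset hqmem ((Set.subset_insert p X).trans (self_subset_tau hR _))
      have hRpq : R (insert p X) (insert q X) :=
        hR.trans (r_tau hR h1 (insert p X))
          (hDeq ▸ hR.symm (r_tau hR h1 (insert q X)))
      have hmuX : muR R (insert p X) ⊆ X := by
        intro v hv
        have hvp : v ∈ insert p X := mu_subset (hR.refl _) hv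
        have hvq : v ∈ insert q X := mu_subset hRpq hv
        rcases hvp with rfl | hvX
        · rcases hvq with rfl | hvX
          · exact absurd rfl hpq
          · exact hvX
        · exact hvX
      have hRX : R (insert p X) X :=
        interval_mem hR h1 h3 h2 hmuX ((Set.subset_insert p X).trans (self_subset_tau hR _))
      have : tauR R X = tauR R (insert p X) := tau_eq_of_R hR (hR.symm hRX)
      apply hpX
      rw [this]
      exact self_subset_tau hR _ (Set.mem_insert p X)
    · intro X Y
      constructor
      · exact tau_eq_of_R hR
      · intro h
        exact hR.trans (r_tau hR h1 X) (h ▸ hR.symm (r_tau hR h1 Y))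
end

section
/- Let (E, F) be a greedoid with rank function r(X) = max{|A| : A ⊆ X, A ∈ F} and rank closure operator σ(X) = {x ∈ E : r(X ∪ {x}) = r(X)}. Then F = {X ⊆ E : σ(Y) ≠ σ(X) for every proper subset Y ⊂ X}; that is, the feasible sets of the greedoid are exactly the inclusion-minimal generators (bases) with respect to σ. -/
/-- A greedoid on `E`: `∅` is feasible and larger feasible sets augment smaller ones. -/
def IsGreedoid {E : Type*} (F : Set (Set E)) : Prop :=
  ∅ ∈ F ∧ ∀ X ∈ F, ∀ Y ∈ F, Y.ncard < X.ncard → ∃ x ∈ X \ Y, insert x Y ∈ F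

/-- The rank function of a set system: `r X = max {|A| : A ⊆ X, A ∈ F}`. -/
noncomputable def greedoidRank {E : Type*} (F : Set (Set E)) (X : Set E) : ℕ :=
  sSup {n | ∃ A ∈ F, A ⊆ X ∧ A.ncard = n}

/-- The rank closure operator `σ X = {x : r (X ∪ {x}) = r X}`. -/
noncomputable def rankClosure {E : Type*} (F : Set (Set E)) (X : Set E) : Set E :=
  {x | greedoidRank F (insert x X) = greedoidRank F X}

section Aux

variable {E : Type*} [Fintype E] {F : Set (Set E)}

lemma rank_bdd (X : Set E) : BddAbove {n | ∃ A ∈ F, A ⊆ X ∧ A.ncard = n} := by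
  refine ⟨Fintype.card E, ?_⟩
  rintro n ⟨A, -, -, rfl⟩
  calc A.ncard ≤ (Set.univ : Set E).ncard :=
        Set.ncard_le_ncard (Set.subset_univ A) Set.finite_univ
    _ = Fintype.card E := by simp [Set.ncard_univ]

lemma rank_exists (hF : IsGreedoid F) (X : Set E) :
    ∃ A ∈ F, A ⊆ X ∧ A.ncard = greedoidRank F X :=
  Nat.sSup_mem (s := {n | ∃ A ∈ F, A ⊆ X ∧ A.ncard = n})
    ⟨0, ⟨∅, hF.1, Set.empty_subset X, by simp⟩⟩ (rank_bdd X)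

lemma le_rank {A X : Set E} (hA : A ∈ F) (hAX : A ⊆ X) : A.ncard ≤ greedoidRank F X :=
  le_csSup (rank_bdd X) ⟨A, hA, hAX, rfl⟩

lemma rank_mono (hF : IsGreedoid F) {X Y : Set E} (h : X ⊆ Y) :
    greedoidRank F X ≤ greedoidRank F Y := by
  refine csSup_le ⟨0, ⟨∅, hF.1, Set.empty_subset X, by simp⟩⟩ ?_
  rintro n ⟨A, hA, hAX, rfl⟩
  exact le_rank hA (hAX.trans h)

lemma rank_le_ncard (hF : IsGreedoid F) (X : Set E) : greedoidRank F X ≤ X.ncard := by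
  refine csSup_le ⟨0, ⟨∅, hF.1, Set.empty_subset X, by simp⟩⟩ ?_
  rintro n ⟨A, -, hAX, rfl⟩
  exact Set.ncard_le_ncard hAX X.toFinite

lemma rank_feasible (hF : IsGreedoid F) {X : Set E} (hX : X ∈ F) :
    greedoidRank F X = X.ncard :=
  le_antisymm (rank_le_ncard hF X) (le_rank hX subset_rfl)

end Aux

theorem stmt12 {E : Type*} [Fintype E] (F : Set (Set E)) (hF : IsGreedoid F) :
    F = {X : Set E | ∀ Y : Set E, Y ⊂ X → rankClosure F Y ≠ rankClosure F X} := by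
  ext X
  simp only [Set.mem_setOf_eq]
  constructor
  · -- feasible ⟹ minimal generator
    intro hX Y hYX hσ
    obtain ⟨A, hA, hAY, hAr⟩ := rank_exists hF Y
    have hAX : A.ncard < X.ncard :=
      lt_of_le_of_lt (Set.ncard_le_ncard hAY Y.toFinite)
        (Set.ncard_lt_ncard hYX X.toFinite)
    obtain ⟨x, hxXA, hxA⟩ := hF.2 X hX A hA hAX
    have hxnA : x ∉ A := hxXA.2
    have hcard : (insert x A).ncard = A.ncard + 1 := Set.ncard_insert_of_notMem hxnA
    by_cases hxY : x ∈ Y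
    · have := le_rank (F := F) hxA (Set.insert_subset hxY hAY)
      omega
    · -- x ∈ X ⊆ σ X = σ Y, so r (insert x Y) = r Y
      have hxσX : x ∈ rankClosure F X := by
        have : insert x X = X := Set.insert_eq_self.mpr hxXA.1
        simp [rankClosure, this]
      have hxσY : x ∈ rankClosure F Y := hσ ▸ hxσX
      have h1 : A.ncard + 1 ≤ greedoidRank F (insert x Y) := by
        rw [← hcard]
        exact le_rank hxA (Set.insert_subset_insert hAY)
      have h2 : greedoidRank F (insert x Y) = greedoidRank F Y := hxσY
      omega
  · -- minimal generator ⟹ feasible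
    intro hmin
    obtain ⟨A, hA, hAX, hAr⟩ := rank_exists hF X
    by_cases hAeq : A = X
    · rwa [hAeq] at hA
    · exfalso
      refine hmin A ⟨hAX, fun h => hAeq (subset_antisymm hAX h)⟩ ?_
      have hrAX : greedoidRank F A = greedoidRank F X := by
        rw [rank_feasible hF hA, hAr]
      ext x
      simp only [rankClosure, Set.mem_setOf_eq]
      constructor
      · intro hx
        refine le_antisymm ?_ (rank_mono hF (Set.subset_insert x X))
        by_contra hgt
        push_neg at hgt
        obtain ⟨B, hB, hBX, hBr⟩ := rank_exists hF (insert x X)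
        have hABlt : A.ncard < B.ncard := by omega
        obtain ⟨b, hbBA, hbA⟩ := hF.2 B hB A hA hABlt
        have hbnA : b ∉ A := hbBA.2
        have hcard : (insert b A).ncard = A.ncard + 1 := Set.ncard_insert_of_notMem hbnA
        rcases Set.mem_insert_iff.mp (hBX hbBA.1) with hbx | hbX
        · -- b = x : insert x A feasible, r (insert x A) ≥ |A|+1 > r A
          subst hbx
          have h1 : A.ncard + 1 ≤ greedoidRank F (insert b A) := by
            rw [← hcard]; exact le_rank hbA subset_rfl
          have h2 : greedoidRank F (insert b A) = greedoidRank F A := hx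
          rw [rank_feasible hF hA] at h2
          omega
        · -- b ∈ X : insert b A ⊆ X feasible, contradicts |A| = r X
          have h1 : A.ncard + 1 ≤ greedoidRank F X := by
            rw [← hcard]; exact le_rank hbA (Set.insert_subset hbX hAX)
          omega
      · intro hx
        refine le_antisymm ?_ (rank_mono hF (Set.subset_insert x A))
        calc greedoidRank F (insert x A) ≤ greedoidRank F (insert x X) :=
              rank_mono hF (Set.insert_subset_insert hAX)
          _ = greedoidRank F X := hx
          _ = greedoidRank F A := hrAX.symm
end

section
/- Let E be a finite set and R an equivalence relation on 2^E satisfying (R1) (X, Y) ∈ R implies (X, X ∪ Y) ∈ R, and (R2) X ⊆ Y ⊆ Z and (X, Z) ∈ R imply (X, Y) ∈ R. Let F = {X ⊆ E : (X, Y) ∉ R for every proper subset Y ⊂ X}. Then R satisfies (R4): for all X ⊆ E and distinct x, y ∉ X, if (X ∪ {y}, X ∪ {x, y}) ∈ R but (X ∪ {x}, X ∪ {x, y}) ∉ R, then there exists z ∈ X ∪ {x} with (X ∪ {x} \ {z}, X ∪ {x}) ∈ R — if and only if R satisfies the augmentation property: for every A ∈ F and every a ∈ E \ A with (A, A ∪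 {a}) ∉ R, one has A ∪ {a} ∈ F. -/
theorem stmt13 {E : Type*} [Fintype E] (R : Set E → Set E → Prop) (hR : Equivalence R)
    (hR1 : ∀ X Y : Set E, R X Y → R X (X ∪ Y))
    (hR2 : ∀ X Y Z : Set E, X ⊆ Y → Y ⊆ Z → R X Z → R X Y)
    (F : Set (Set E)) (hF : F = {X : Set E | ∀ Y : Set E, Y ⊂ X → ¬ R X Y}) :
    (∀ (X : Set E) (x y : E), x ≠ y → x ∉ X → y ∉ X →
        R (insert y X) (insert x (insert y X)) →
        ¬ R (insert x X) (insert x (insert y X)) →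
        ∃ z ∈ insert x X, R ((insert x X) \ {z}) (insert x X)) ↔
      (∀ A ∈ F, ∀ a ∉ A, ¬ R A (insert a A) → insert a A ∈ F) := by
  have aux : ∀ S Y : Set E, Y ⊂ S → R S Y → ∃ w ∈ S, R (S \ {w}) S := by
    intro S Y hYS hRSY
    obtain ⟨w, hwS, hwY⟩ := Set.exists_of_ssubset hYS
    refine ⟨w, hwS, hR.symm ?_⟩
    exact hR.trans hRSY (hR2 Y (S \ {w}) S
      (Set.subset_diff_singleton hYS.subset hwY) Set.diff_subset (hR.symm hRSY))
  constructor
  · intro h4 A hA a haA hRA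
    rw [hF] at hA ⊢
    intro Y hY hRY
    obtain ⟨w, hw, hRw⟩ := aux _ _ hY hRY
    rcases eq_or_ne w a with rfl | hwa
    · have e : (insert w A) \ {w} = A := by
        rw [Set.insert_diff_of_mem _ (Set.mem_singleton w),
          Set.diff_singleton_eq_self haA]
      rw [e] at hRw
      exact hRA hRw
    · have hwA : w ∈ A := by
        rcases hw with h | h
        · exact absurd h hwa
        · exact h
      have hx : w ∉ A \ {w} := by simp
      have hy : a ∉ A \ {w} := fun h => haA h.1
      have e1 : insert a (A \ {w}) = (insert a A) \ {w} := by
        ext t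
        simp only [Set.mem_insert_iff, Set.mem_diff, Set.mem_singleton_iff]
        constructor
        · rintro (rfl | ⟨h1, h2⟩)
          · exact ⟨Or.inl rfl, Ne.symm hwa⟩
          · exact ⟨Or.inr h1, h2⟩
        · rintro ⟨rfl | h1, h2⟩
          · exact Or.inl rfl
          · exact Or.inr ⟨h1, h2⟩
      have e2 : insert w (A \ {w}) = A := by
        rw [Set.insert_diff_singleton, Set.insert_eq_self.2 hwA]
      have e3 : insert w (insert a (A \ {w})) = insert a A := by
        rw [Set.insert_comm, e2]
      obtain ⟨z, hz, hRz⟩ := h4 (A \ {w}) w a hwa hx hy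
        (by rw [e3, e1]; exact hRw) (by rw [e2, e3]; exact hRA)
      rw [e2] at hz hRz
      exact hA (A \ {z}) (Set.sdiff_singleton_ssubset.2 hz) (hR.symm hRz)
  · intro haug X x y hxy hxX hyX hRy hRx
    by_contra hc
    push_neg at hc
    have hmem : insert x X ∈ F := by
      rw [hF]
      intro Y hY hRY
      obtain ⟨w, hw, hRw⟩ := aux _ _ hY hRY
      exact hc w hw hRw
    have hyX' : y ∉ insert x X := by
      simp only [Set.mem_insert_iff, not_or]
      exact ⟨hxy.symm, hyX⟩
    have h2 := haug _ hmem y hyX' (by rwa [Set.insert_comm] at hRx)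
    rw [hF] at h2
    refine h2 (insert y X) ?_ (by rw [Set.insert_comm]; exact hR.symm hRy)
    constructor
    · rw [Set.insert_comm]; exact Set.subset_insert _ _
    · intro hsub
      have : x ∈ insert y X := hsub (Set.mem_insert_of_mem y (Set.mem_insert x X))
      rcases this with h | h
      · exact hxy h
      · exact hxX h
end

section
/- Let E be a finite set and R an equivalence relation on 2^E. Then R is the cospanning relation of a greedoid on E (i.e., there exists a greedoid (E, F) with rank closure operator σ such that (X, Y) ∈ R iff σ(X) = σ(Y)) if and only if R satisfies, for all X, Y, Z ⊆ E and distinct x, y ∉ X: (R1) (X, Y) ∈ R implies (X, X ∪ Y) ∈ R; (R2) X ⊆ Y ⊆ Z and (X, Z) ∈ R imply (X, Y) ∈ R; and (R4) if (X ∪ {y}, X ∪ {x, y}) ∈ R but (X ∪ {x}, X ∪ {x, y}) ∉ R, then there exists z ∈ X ∪ {x} with (X ∪ {x} \ {z}, X ∪ {x}) ∈ R. Moreover, in that case F is exactly the family of inclusion-minimal sets of the equivalence classes of R. -/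
set_option linter.unusedSectionVars false
set_option linter.unusedVariables false
set_option maxHeartbeats 1000000

namespace S14
variable {E : Type*} [Fintype E] {F : Set (Set E)}

variable {E : Type*} [Fintype E] {F : Set (Set E)}

lemma rset_nonempty (hF : IsGreedoid F) (X : Set E) :
    {n | ∃ A ∈ F, A ⊆ X ∧ A.ncard = n}.Nonempty :=
  ⟨0, ∅, hF.1, Set.empty_subset X, Set.ncard_empty E⟩

lemma rset_bdd (X : Set E) : BddAbove {n | ∃ A ∈ F, A ⊆ X ∧ A.ncard = n} := by
  refine ⟨X.ncard, fun n hn => ?_⟩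
  obtain ⟨A, -, hAX, rfl⟩ := hn
  exact Set.ncard_le_ncard hAX X.toFinite

lemma rank_spec (hF : IsGreedoid F) (X : Set E) :
    ∃ A ∈ F, A ⊆ X ∧ A.ncard = greedoidRank F X :=
  Nat.sSup_mem (rset_nonempty hF X) (rset_bdd X)

lemma le_rank {A X : Set E} (hA : A ∈ F) (hAX : A ⊆ X) : A.ncard ≤ greedoidRank F X :=
  le_csSup (rset_bdd X) ⟨A, hA, hAX, rfl⟩

lemma rank_mono (hF : IsGreedoid F) {X Y : Set E} (h : X ⊆ Y) :
    greedoidRank F X ≤ greedoidRank F Y :=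
  csSup_le (rset_nonempty hF X) (by rintro n ⟨A, hA, hAX, rfl⟩; exact le_rank hA (hAX.trans h))

lemma rank_le_ncard (hF : IsGreedoid F) (X : Set E) : greedoidRank F X ≤ X.ncard :=
  csSup_le (rset_nonempty hF X)
    (by rintro n ⟨A, -, hAX, rfl⟩; exact Set.ncard_le_ncard hAX X.toFinite)

lemma rank_of_mem {A : Set E} (hA : A ∈ F) (hF : IsGreedoid F) :
    greedoidRank F A = A.ncard :=
  le_antisymm (rank_le_ncard hF A) (le_rank hA subset_rfl)

lemma mem_of_rank (hF : IsGreedoid F) {A : Set E} (h : greedoidRank F A = A.ncard) : A ∈ F := by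
  obtain ⟨B, hB, hBA, hcard⟩ := rank_spec hF A
  have : B = A := Set.eq_of_subset_of_ncard_le hBA (by omega) A.toFinite
  exact this ▸ hB

/-- local submodularity -/
lemma submod (hF : IsGreedoid F) {X : Set E} {x y : E}
    (hx : greedoidRank F (insert x X) = greedoidRank F X)
    (hy : greedoidRank F (insert y X) = greedoidRank F X) :
    greedoidRank F (insert x (insert y X)) = greedoidRank F X := by
  refine le_antisymm ?_ (rank_mono hF (by intro e he; exact Set.mem_insert_iff.2 (Or.inr (Set.mem_insert_iff.2 (Or.inr he)))))
  obtain ⟨A, hA, hAsub, hAcard⟩ := rank_spec hF (insert x (insert y X))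
  rw [← hAcard]
  by_contra hgt
  push_neg at hgt
  obtain ⟨B, hB, hBX, hBcard⟩ := rank_spec hF X
  obtain ⟨e, he, hins⟩ := hF.2 A hA B hB (by omega)
  have heA : e ∈ insert x (insert y X) := hAsub he.1
  have hcard : (insert e B).ncard = B.ncard + 1 := Set.ncard_insert_of_notMem he.2
  have key : B.ncard + 1 ≤ greedoidRank F X := by
    rcases heA with rfl | rfl | heX
    · have := le_rank (F := F) hins (Set.insert_subset_insert hBX)
      omega
    · have := le_rank (F := F) hins (Set.insert_subset_insert hBX)
      omega
    · have := le_rank (F := F) hins (Set.insert_subset heX hBX)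
      omega
  omega



-- assume previous lemmas as axioms for skeleton testing
lemma iter2 (hF : IsGreedoid F) {X : Set E} (S : Set E) {e : E}
    (hS : greedoidRank F (X ∪ S) = greedoidRank F X)
    (he : greedoidRank F (insert e X) = greedoidRank F X) :
    greedoidRank F (insert e (X ∪ S)) = greedoidRank F X := by
  refine Set.Finite.induction_on (motive := fun T _ => greedoidRank F (X ∪ T) = greedoidRank F X →
      greedoidRank F (insert e (X ∪ T)) = greedoidRank F X) S S.toFinite
    (fun _ => by simpa using he) ?_ hS
  intro a S' ha hf ih hS
  have hXS : X ∪ insert a S' = insert a (X ∪ S') := Set.union_insert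
  rw [hXS] at hS
  have hS' : greedoidRank F (X ∪ S') = greedoidRank F X := by
    refine le_antisymm ?_ (rank_mono hF Set.subset_union_left)
    calc greedoidRank F (X ∪ S') ≤ greedoidRank F (insert a (X ∪ S')) :=
          rank_mono hF (Set.subset_insert _ _)
      _ = greedoidRank F X := hS
  have ihe : greedoidRank F (insert e (X ∪ S')) = greedoidRank F X := ih hS'
  by_cases hae : a = e
  · subst hae
    rw [hXS, Set.insert_idem, ihe]
  · have := submod hF (x := e) (y := a) (X := X ∪ S')
      (by rw [ihe, hS']) (by rw [hS, hS'])
    rw [hXS, this, hS']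

lemma rank_union_eq (hF : IsGreedoid F) {X : Set E} (S : Set E)
    (h : ∀ e ∈ S, greedoidRank F (insert e X) = greedoidRank F X) :
    greedoidRank F (X ∪ S) = greedoidRank F X := by
  refine Set.Finite.induction_on
    (motive := fun T _ => (∀ e ∈ T, greedoidRank F (insert e X) = greedoidRank F X) →
      greedoidRank F (X ∪ T) = greedoidRank F X) S S.toFinite (fun _ => by simp) ?_ h
  intro a S' ha hf ih h
  have hS' := ih (fun e he => h e (Set.mem_insert_of_mem _ he))
  rw [Set.union_insert]
  exact iter2 hF S' hS' (h a (Set.mem_insert _ _))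

lemma closure_eq_of_rank_union (hF : IsGreedoid F) {X Y : Set E}
    (h : greedoidRank F (X ∪ Y) = greedoidRank F X) :
    rankClosure F (X ∪ Y) = rankClosure F X := by
  ext e
  simp only [rankClosure, Set.mem_setOf_eq]
  constructor
  · intro he
    have h1 : greedoidRank F X ≤ greedoidRank F (insert e X) := rank_mono hF (Set.subset_insert _ _)
    have h2 : greedoidRank F (insert e X) ≤ greedoidRank F (insert e (X ∪ Y)) :=
      rank_mono hF (Set.insert_subset_insert Set.subset_union_left)
    omega
  · intro he
    rw [iter2 hF Y h he, h]

lemma subset_closure (X : Set E) : X ⊆ rankClosure F X := by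
  intro e he
  simp only [rankClosure, Set.mem_setOf_eq, Set.insert_eq_self.2 he]

lemma KL (hF : IsGreedoid F) {X Y : Set E} :
    rankClosure F X = rankClosure F Y ↔
      greedoidRank F (X ∪ Y) = greedoidRank F X ∧
      greedoidRank F (X ∪ Y) = greedoidRank F Y := by
  constructor
  · intro h
    constructor
    · refine rank_union_eq hF Y (fun e he => ?_)
      have : e ∈ rankClosure F X := h ▸ subset_closure Y he
      exact this
    · rw [Set.union_comm]
      refine rank_union_eq hF X (fun e he => ?_)
      have : e ∈ rankClosure F Y := h.symm ▸ subset_closure X he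
      exact this
  · rintro ⟨h1, h2⟩
    have e1 := closure_eq_of_rank_union hF h1
    have e2 := closure_eq_of_rank_union hF (X := Y) (Y := X) (by rwa [Set.union_comm])
    rw [← e1, ← e2, Set.union_comm]



lemma forward_R1 (hF : IsGreedoid F) {X Y : Set E}
    (h : rankClosure F X = rankClosure F Y) : rankClosure F X = rankClosure F (X ∪ Y) := by
  obtain ⟨c1, c2⟩ := (KL hF).1 h
  refine (KL hF).2 ⟨?_, ?_⟩
  · rw [Set.union_eq_self_of_subset_left Set.subset_union_left]
    exact c1
  · rw [Set.union_eq_self_of_subset_left Set.subset_union_left]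

lemma forward_R2 (hF : IsGreedoid F) {X Y Z : Set E} (hXY : X ⊆ Y) (hYZ : Y ⊆ Z)
    (h : rankClosure F X = rankClosure F Z) : rankClosure F X = rankClosure F Y := by
  obtain ⟨c1, c2⟩ := (KL hF).1 h
  rw [Set.union_eq_self_of_subset_left (hXY.trans hYZ)] at c1
  have hY1 : greedoidRank F Y ≤ greedoidRank F Z := rank_mono hF hYZ
  have hY2 : greedoidRank F X ≤ greedoidRank F Y := rank_mono hF hXY
  refine (KL hF).2 ⟨?_, ?_⟩
  · rw [Set.union_eq_self_of_subset_left hXY]; omega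
  · rw [Set.union_eq_self_of_subset_left hXY]

lemma forward_R4 (hF : IsGreedoid F) {X : Set E} {x y : E} (hxy : x ≠ y) (hx : x ∉ X) (hy : y ∉ X)
    (hA : rankClosure F (insert y X) = rankClosure F (insert x (insert y X)))
    (hB : ¬ rankClosure F (insert x X) = rankClosure F (insert x (insert y X))) :
    ∃ z ∈ insert x X, rankClosure F ((insert x X) \ {z}) = rankClosure F (insert x X) := by
  have hsub1 : insert y X ⊆ insert x (insert y X) := Set.subset_insert _ _
  have hA' := (KL hF).1 hA
  rw [Set.union_eq_self_of_subset_left hsub1] at hA'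
  have hsub2 : insert x X ⊆ insert x (insert y X) :=
    Set.insert_subset_insert (Set.subset_insert _ _)
  have hxlt : greedoidRank F (insert x X) < greedoidRank F (insert x (insert y X)) := by
    have hmono := rank_mono hF hsub2
    rcases lt_or_eq_of_le hmono with h | h
    · exact h
    · exfalso; apply hB
      refine (KL hF).2 ⟨?_, ?_⟩
      · rw [Set.union_eq_self_of_subset_left hsub2]; exact h.symm
      · rw [Set.union_eq_self_of_subset_left hsub2]
  have hne : greedoidRank F (insert x X) ≠ (insert x X).ncard := by
    intro heq
    have h1' : greedoidRank F (insert x (insert y X)) ≤ (insert y X).ncard := by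
      rw [hA'.1]; exact rank_le_ncard hF _
    have e1 : (insert x X).ncard = X.ncard + 1 := Set.ncard_insert_of_notMem hx
    have e2 : (insert y X).ncard = X.ncard + 1 := Set.ncard_insert_of_notMem hy
    omega
  obtain ⟨B, hBF, hBsub, hBcard⟩ := rank_spec hF (insert x X)
  have hgt : ¬ (insert x X ⊆ B) := by
    intro hsub
    have h5 := Set.ncard_le_ncard hsub B.toFinite
    have h6 := rank_le_ncard hF (insert x X)
    omega
  obtain ⟨z, hz, hzB⟩ := Set.not_subset.1 hgt
  refine ⟨z, hz, ?_⟩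
  have hBdz : B ⊆ (insert x X) \ {z} :=
    fun b hb => ⟨hBsub hb, fun h => hzB (Set.mem_singleton_iff.1 h ▸ hb)⟩
  have hr1 : greedoidRank F ((insert x X) \ {z}) = greedoidRank F (insert x X) := by
    refine le_antisymm (rank_mono hF Set.diff_subset) ?_
    calc greedoidRank F (insert x X) = B.ncard := hBcard.symm
      _ ≤ _ := le_rank hBF hBdz
  refine (KL hF).2 ⟨?_, ?_⟩
  · rw [Set.union_eq_self_of_subset_left Set.diff_subset]
    exact hr1.symm
  · rw [Set.union_eq_self_of_subset_left Set.diff_subset]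

lemma moreover {R : Set E → Set E → Prop} (hF : IsGreedoid F)
    (hcos : ∀ X Y : Set E, R X Y ↔ rankClosure F X = rankClosure F Y) :
    F = {X : Set E | ∀ Y : Set E, Y ⊂ X → ¬ R X Y} := by
  ext A
  simp only [Set.mem_setOf_eq]
  constructor
  · intro hA Y hY hRAY
    have h := (KL hF).1 ((hcos A Y).1 hRAY)
    rw [Set.union_eq_self_of_subset_right hY.subset] at h
    have h1 : greedoidRank F A = A.ncard := rank_of_mem hA hF
    have h2' : greedoidRank F Y ≤ Y.ncard := rank_le_ncard hF Y
    have h3 : Y.ncard < A.ncard := Set.ncard_lt_ncard hY A.toFinite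
    omega
  · intro hmin
    by_contra hA
    have hne : greedoidRank F A ≠ A.ncard := fun h => hA (mem_of_rank hF h)
    obtain ⟨B, hBF, hBA, hBcard⟩ := rank_spec hF A
    have hgt : ¬ (A ⊆ B) := by
      intro hsub
      have h5 := Set.ncard_le_ncard hsub B.toFinite
      have h6 := rank_le_ncard hF A
      omega
    obtain ⟨z, hz, hzB⟩ := Set.not_subset.1 hgt
    have hBdz : B ⊆ A \ {z} :=
      fun b hb => ⟨hBA hb, fun h => hzB (Set.mem_singleton_iff.1 h ▸ hb)⟩
    have hr : greedoidRank F (A \ {z}) = greedoidRank F A := by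
      refine le_antisymm (rank_mono hF Set.diff_subset) ?_
      calc greedoidRank F A = B.ncard := hBcard.symm
        _ ≤ _ := le_rank hBF hBdz
    refine hmin (A \ {z}) (Set.sdiff_singleton_ssubset.2 hz) ?_
    rw [hcos]
    refine (KL hF).2 ⟨?_, ?_⟩
    · rw [Set.union_eq_self_of_subset_right Set.diff_subset]
    · rw [Set.union_eq_self_of_subset_right Set.diff_subset]
      exact hr.symm


variable {E : Type*} [Fintype E]

def Fm (R : Set E → Set E → Prop) : Set (Set E) := {A | ∀ Y : Set E, Y ⊂ A → ¬ R A Y}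

def IsB (R : Set E → Set E → Prop) (B X : Set E) : Prop := B ∈ Fm R ∧ B ⊆ X ∧ R B X

def Equi (R : Set E → Set E → Prop) (X : Set E) : Prop :=
  ∀ B₁ B₂ : Set E, IsB R B₁ X → IsB R B₂ X → B₁.ncard = B₂.ncard

variable {R : Set E → Set E → Prop} (hR : Equivalence R)
  (h1 : ∀ X Y : Set E, R X Y → R X (X ∪ Y))
  (h2 : ∀ X Y Z : Set E, X ⊆ Y → Y ⊆ Z → R X Z → R X Y)
  (h4 : ∀ (X : Set E) (x y : E), x ≠ y → x ∉ X → y ∉ X →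
         R (insert y X) (insert x (insert y X)) →
         ¬ R (insert x X) (insert x (insert y X)) →
         ∃ z ∈ insert x X, R ((insert x X) \ {z}) (insert x X))

lemma empty_mem : (∅ : Set E) ∈ Fm R := by
  intro Y hY
  have := Set.ncard_lt_ncard hY (Set.finite_empty)
  simp at this

lemma not_mem_Fm {A : Set E} (h : A ∉ Fm R) : ∃ Y : Set E, Y ⊂ A ∧ R A Y := by
  by_contra hc
  push_neg at hc
  exact h (fun Y hY => hc Y hY)

include hR h2 in
lemma conv {A X Y : Set E} (hAX : R A X) (hAY : A ⊆ Y) (hYX : Y ⊆ X) : R Y X :=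
  hR.trans (hR.symm (h2 A Y X hAY hYX hAX)) hAX

include hR in
lemma exists_basis (X : Set E) : ∃ B, IsB R B X := by
  have hne : {n | ∃ Y : Set E, Y ⊆ X ∧ R Y X ∧ Y.ncard = n}.Nonempty :=
    ⟨X.ncard, X, subset_rfl, hR.refl X, rfl⟩
  obtain ⟨B, hBX, hRB, hBcard⟩ := Nat.sInf_mem hne
  refine ⟨B, ?_, hBX, hRB⟩
  intro Y hY hRY
  have hYX : R Y X := hR.trans (hR.symm hRY) hRB
  have hle : sInf {n | ∃ Y : Set E, Y ⊆ X ∧ R Y X ∧ Y.ncard = n} ≤ Y.ncard :=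
    Nat.sInf_le ⟨Y, hY.subset.trans hBX, hYX, rfl⟩
  have hlt : Y.ncard < B.ncard := Set.ncard_lt_ncard hY B.toFinite
  omega

include hR h2 h4 in
lemma free_insert {A : Set E} {e : E} (hA : A ∈ Fm R) (he : e ∉ A)
    (hins : insert e A ∉ Fm R) : R A (insert e A) := by
  obtain ⟨Y, hYsub, hRel⟩ := not_mem_Fm hins
  obtain ⟨z, hz, hzY⟩ := Set.exists_of_ssubset hYsub
  have hYz : Y ⊆ (insert e A) \ {z} := fun y hy =>
    ⟨hYsub.subset hy, by simp only [Set.mem_singleton_iff]; rintro rfl; exact hzY hy⟩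
  have hrel2 : R ((insert e A) \ {z}) (insert e A) := by
    have h' : R Y ((insert e A) \ {z}) := h2 _ _ _ hYz Set.diff_subset (hR.symm hRel)
    exact hR.trans (hR.symm h') (hR.symm hRel)
  by_cases hze : z = e
  · subst hze
    have heq : (insert z A) \ {z} = A := by
      rw [Set.insert_diff_of_mem _ (Set.mem_singleton z), Set.diff_singleton_eq_self he]
    rwa [heq] at hrel2
  · have hzA : z ∈ A := by
      rcases hz with rfl | h
      · exact absurd rfl hze
      · exact h
    by_contra hfree
    have hx : z ∉ A \ {z} := fun h => h.2 rfl
    have hy' : e ∉ A \ {z} := fun h => he h.1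
    have ein : insert e (A \ {z}) = (insert e A) \ {z} :=
      Set.insert_diff_singleton_comm (fun h => hze h.symm) A
    have ein2 : insert z (A \ {z}) = A := by
      rw [Set.insert_diff_singleton, Set.insert_eq_self.2 hzA]
    have ein3 : insert z (insert e (A \ {z})) = insert e A := by
      rw [Set.insert_comm, ein2]
    have prem1 : R (insert e (A \ {z})) (insert z (insert e (A \ {z}))) := by
      rw [ein3, ein]; exact hrel2
    have prem2 : ¬ R (insert z (A \ {z})) (insert z (insert e (A \ {z}))) := by
      rw [ein2, ein3]; exact hfree
    obtain ⟨w, hw, hwrel⟩ := h4 (A \ {z}) z e hze hx hy' prem1 prem2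
    rw [ein2] at hw hwrel
    exact hA (A \ {w}) (Set.sdiff_singleton_ssubset.2 hw) (hR.symm hwrel)

include hR h1 h2 h4 in
lemma free_union {A : Set E} (S : Set E) (h : ∀ e ∈ S, R A (insert e A)) : R A (A ∪ S) := by
  refine Set.Finite.induction_on (motive := fun T _ => (∀ e ∈ T, R A (insert e A)) → R A (A ∪ T))
    S S.toFinite (fun _ => by simpa using hR.refl A) ?_ h
  intro a S' ha hf ih h
  have hu1 : R A (A ∪ S') := ih (fun e he => h e (Set.mem_insert_of_mem _ he))
  have hu2 : R A (insert a A) := h a (Set.mem_insert _ _)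
  have hu3 : R (A ∪ S') (insert a A) := hR.trans (hR.symm hu1) hu2
  have hu4 : R (A ∪ S') ((A ∪ S') ∪ (insert a A)) := h1 _ _ hu3
  have heq : (A ∪ S') ∪ (insert a A) = A ∪ insert a S' := by
    ext x
    simp only [Set.mem_union, Set.mem_insert_iff]
    tauto
  rw [heq] at hu4
  exact hR.trans hu1 hu4

include hR h1 h2 h4 in
lemma basis_of_maximal {B X : Set E} (hB : B ∈ Fm R) (hBX : B ⊆ X)
    (hmax : ∀ e ∈ X \ B, insert e B ∉ Fm R) : R B X := by
  have := free_union hR h1 h2 h4 (A := B) (X \ B)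
    (fun e he => free_insert hR h2 h4 hB he.2 (hmax e he))
  rwa [Set.union_diff_cancel hBX] at this

include hR h1 h2 h4 in
lemma exists_basis_superset {U X : Set E} (hU : U ∈ Fm R) (hUX : U ⊆ X) :
    ∃ B, IsB R B X ∧ U ⊆ B := by
  have aux : ∀ k (U : Set E), U ∈ Fm R → U ⊆ X → X.ncard ≤ U.ncard + k →
      ∃ B, IsB R B X ∧ U ⊆ B := by
    intro k
    induction k with
    | zero =>
      intro U hU hUX hle
      have hUeq : U = X := Set.eq_of_subset_of_ncard_le hUX (by omega) X.toFinite
      exact ⟨U, ⟨hU, hUX, hUeq ▸ hR.refl U⟩, subset_rfl⟩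
    | succ k ih =>
      intro U hU hUX hle
      by_cases h : ∃ e ∈ X \ U, insert e U ∈ Fm R
      · obtain ⟨e, he, hins⟩ := h
        have hs1 : insert e U ⊆ X := Set.insert_subset he.1 hUX
        have hs2 : (insert e U).ncard = U.ncard + 1 := Set.ncard_insert_of_notMem he.2
        obtain ⟨B, hB, hsub⟩ := ih (insert e U) hins hs1 (by omega)
        exact ⟨B, hB, (Set.subset_insert _ _).trans hsub⟩
      · push_neg at h
        exact ⟨U, ⟨hU, hUX, basis_of_maximal hR h1 h2 h4 hU hUX h⟩, subset_rfl⟩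
  exact aux X.ncard U hU hUX (by omega)

include hR h1 h2 h4 in
lemma exch {U V : Set E} (hEq : Equi R (U ∪ V)) (hU : U ∈ Fm R) (hV : V ∈ Fm R)
    (hlt : V.ncard < U.ncard) : ∃ e ∈ U \ V, insert e V ∈ Fm R := by
  by_cases h : ∃ e ∈ (U ∪ V) \ V, insert e V ∈ Fm R
  · obtain ⟨e, he, hins⟩ := h
    exact ⟨e, ⟨he.1.resolve_right he.2, he.2⟩, hins⟩
  · push_neg at h
    have hVB : R V (U ∪ V) := basis_of_maximal hR h1 h2 h4 hV Set.subset_union_right h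
    obtain ⟨B, hB, hUB⟩ := exists_basis_superset hR h1 h2 h4 hU (Set.subset_union_left (t := V))
    have heq := hEq V B ⟨hV, Set.subset_union_right, hVB⟩ hB
    have hle : U.ncard ≤ B.ncard := Set.ncard_le_ncard hUB B.toFinite
    omega

include hR h1 h2 h4 in
lemma exists_pred {U : Set E} (hU : U ∈ Fm R) (hEqU : Equi R U) (hne : U.Nonempty) :
    ∃ V, V ∈ Fm R ∧ V ⊆ U ∧ V.ncard + 1 = U.ncard := by
  have hTne : {n | ∃ V, V ∈ Fm R ∧ V ⊂ U ∧ V.ncard = n}.Nonempty :=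
    ⟨0, ∅, empty_mem, Set.empty_ssubset.2 hne, Set.ncard_empty E⟩
  have hTbdd : BddAbove {n | ∃ V, V ∈ Fm R ∧ V ⊂ U ∧ V.ncard = n} := by
    refine ⟨U.ncard, ?_⟩
    rintro n ⟨V, -, hVU, rfl⟩
    exact (Set.ncard_lt_ncard hVU U.toFinite).le
  obtain ⟨V, hV, hVU, hVcard⟩ := Nat.sSup_mem hTne hTbdd
  have hlt : V.ncard < U.ncard := Set.ncard_lt_ncard hVU U.toFinite
  refine ⟨V, hV, hVU.subset, ?_⟩
  by_contra hcon
  have hEqU2 : Equi R (U ∪ V) := by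
    rwa [Set.union_eq_self_of_subset_right hVU.subset]
  obtain ⟨e, he, hins⟩ := exch hR h1 h2 h4 hEqU2 hU hV hlt
  have hins_sub : insert e V ⊆ U := Set.insert_subset he.1 hVU.subset
  have hins_card : (insert e V).ncard = V.ncard + 1 := Set.ncard_insert_of_notMem he.2
  have hss : insert e V ⊂ U := by
    refine hins_sub.ssubset_of_ne (fun heq => ?_)
    rw [heq] at hins_card
    omega
  have hmem : (insert e V).ncard ∈ {n | ∃ V, V ∈ Fm R ∧ V ⊂ U ∧ V.ncard = n} :=
    ⟨insert e V, hins, hss, rfl⟩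
  have := le_csSup hTbdd hmem
  omega

include hR h1 h2 h4 in
lemma chain_exists {P : Set E} (hP : P ∈ Fm R) (hEq : ∀ Y : Set E, Y.ncard ≤ P.ncard → Equi R Y) :
    ∃ c : ℕ → Set E, c P.ncard = P ∧
      (∀ i, i ≤ P.ncard → c i ∈ Fm R ∧ c i ⊆ P ∧ (c i).ncard = i) ∧
      (∀ i, i < P.ncard → c i ⊆ c (i + 1)) := by
  have aux : ∀ n (P : Set E), P ∈ Fm R → (∀ Y : Set E, Y.ncard ≤ P.ncard → Equi R Y) →
      P.ncard = n → ∃ c : ℕ → Set E, c P.ncard = P ∧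
      (∀ i, i ≤ P.ncard → c i ∈ Fm R ∧ c i ⊆ P ∧ (c i).ncard = i) ∧
      (∀ i, i < P.ncard → c i ⊆ c (i + 1)) := by
    intro n
    induction n with
    | zero =>
      intro P hP hEq hcard
      have hPe : P = ∅ := (Set.ncard_eq_zero P.toFinite).1 hcard
      subst hPe
      refine ⟨fun _ => ∅, by simp, fun i hi => ?_, fun i hi => ?_⟩
      · rw [Set.ncard_empty] at hi
        have hi0 : i = 0 := by omega
        exact ⟨hP, subset_rfl, by simp [hi0]⟩
      · simp at hi
    | succ n ih =>
      intro P hP hEq hcard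
      have hPne : P.Nonempty := Set.nonempty_of_ncard_ne_zero (by omega)
      obtain ⟨V, hV, hVP, hVcard⟩ := exists_pred hR h1 h2 h4 hP (hEq P le_rfl) hPne
      have hVn : V.ncard = n := by omega
      obtain ⟨c', hc'V, hc'mem, hc'sub⟩ := ih V hV (fun Y hY => hEq Y (by omega)) hVn
      have heq1 : ∀ i, (fun j => if j = n + 1 then P else c' j) i = if i = n + 1 then P else c' i :=
        fun i => rfl
      refine ⟨fun i => if i = n + 1 then P else c' i, ?_, ?_, ?_⟩
      · rw [heq1, hcard, if_pos rfl]
      · intro i hi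
        rw [hcard] at hi
        rw [heq1]
        by_cases h : i = n + 1
        · subst h
          rw [if_pos rfl]
          exact ⟨hP, subset_rfl, by omega⟩
        · have hin : i ≤ n := by omega
          rw [if_neg h]
          have := hc'mem i (by omega)
          exact ⟨this.1, this.2.1.trans hVP, this.2.2⟩
      · intro i hi
        rw [hcard] at hi
        rw [heq1, heq1]
        by_cases h : i + 1 = n + 1
        · have hin : i = n := by omega
          subst hin
          rw [if_neg (by omega : ¬ i = i + 1), if_pos h]
          have hc'n : c' i = V := by rw [← hVn]; exact hc'V
          rw [hc'n]
          exact hVP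
        · rw [if_neg (by omega : ¬ i = n + 1), if_neg h]
          exact hc'sub i (by omega)
  exact aux P.ncard P hP hEq rfl


include hR h1 h2 h4 in
lemma equi_all : ∀ X : Set E, Equi R X := by
  suffices H : ∀ (n : ℕ) (X : Set E), X.ncard = n → Equi R X from fun X => H X.ncard X rfl
  intro n
  induction n using Nat.strong_induction_on with
  | _ n IH =>
  intro X hXn
  have hIH : ∀ Y : Set E, Y.ncard < X.ncard → Equi R Y := fun Y hY => IH Y.ncard (hXn ▸ hY) Y rfl
  suffices Hlt : ∀ N P : Set E, IsB R N X → IsB R P X → N.ncard < P.ncard → False by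
    intro B₁ B₂ hB₁ hB₂
    rcases lt_trichotomy B₁.ncard B₂.ncard with h | h | h
    · exact (Hlt _ _ hB₁ hB₂ h).elim
    · exact h
    · exact (Hlt _ _ hB₂ hB₁ h).elim
  intro N P hN hP hlt
  obtain ⟨hNF, hNX, hRN⟩ := hN
  obtain ⟨hPF, hPX, hRP⟩ := hP
  have hNne : N.Nonempty := by
    rw [Set.nonempty_iff_ne_empty]
    rintro rfl
    obtain ⟨e, heP⟩ : P.Nonempty := by
      rw [Set.nonempty_iff_ne_empty]; rintro rfl; simp at hlt
    have hre : R ∅ (P \ {e}) :=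
      h2 ∅ (P \ {e}) X (Set.empty_subset _) (Set.diff_subset.trans hPX) hRN
    have hPe : R P (P \ {e}) := hR.trans hRP (hR.trans (hR.symm hRN) hre)
    exact hPF (P \ {e}) (Set.sdiff_singleton_ssubset.2 heP) hPe
  have hn1 : 1 ≤ N.ncard := (Set.ncard_pos N.toFinite).2 hNne
  have hPss : P ⊂ X := by
    rw [Set.ssubset_iff_subset_ne]
    refine ⟨hPX, fun hPeq => ?_⟩
    have hNss : N ⊂ P := by
      rw [Set.ssubset_iff_subset_ne, hPeq]
      exact ⟨hNX, fun h => by rw [h] at hlt; rw [hPeq] at hlt; exact lt_irrefl _ hlt⟩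
    exact hPF N hNss (hR.trans (hPeq ▸ hRP) (hR.symm hRN))
  have hpX : P.ncard < X.ncard := Set.ncard_lt_ncard hPss X.toFinite
  obtain ⟨c, hcP, hcmem, hcsub⟩ :=
    chain_exists hR h1 h2 h4 hPF (fun Y hY => hIH Y (lt_of_le_of_lt hY hpX))
  set p := P.ncard with hp
  set nn := N.ncard with hnn
  have hnp : nn < p := hlt
  have hmono : ∀ j, j ≤ p → ∀ i, i ≤ j → c i ⊆ c j := by
    intro j
    induction j with
    | zero =>
      intro _ i hi
      have h0 : i = 0 := by omega
      subst h0
      exact subset_rfl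
    | succ j ihj =>
      intro hj i hi
      by_cases h : i = j + 1
      · subst h; exact subset_rfl
      · exact (ihj (by omega) i (by omega)).trans (hcsub j (by omega))
  have hSetne : ∀ W : Set E, {i | P \ W ⊆ c i}.Nonempty :=
    fun W => ⟨p, by rw [Set.mem_setOf_eq, hcP]; exact Set.diff_subset⟩
  have hiS_mem : ∀ W : Set E, P \ W ⊆ c (sInf {i | P \ W ⊆ c i}) :=
    fun W => Nat.sInf_mem (hSetne W)
  have hiS_not : ∀ (W : Set E) (k : ℕ), k < sInf {i | P \ W ⊆ c i} → ¬ P \ W ⊆ c k :=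
    fun W k hk => Nat.notMem_of_lt_sInf hk
  have notsubP : ∀ V : Set E, IsB R V X → V.ncard = nn → ¬ V ⊆ P := by
    intro V hV hVn hVP
    have hss : V ⊂ P := by
      rw [Set.ssubset_iff_subset_ne]
      exact ⟨hVP, fun h => by rw [h] at hVn; omega⟩
    exact hPF V hss (hR.trans hRP (hR.symm hV.2.2))
  have hiS_pos : ∀ W : Set E, IsB R W X → W.ncard = nn → 1 ≤ sInf {i | P \ W ⊆ c i} := by
    intro W hW hWn
    by_contra h
    push_neg at h
    have h0 : P \ W ⊆ c 0 := by
      have hm := hiS_mem W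
      have : sInf {i | P \ W ⊆ c i} = 0 := by omega
      rwa [this] at hm
    have hc0 : c 0 = ∅ := (Set.ncard_eq_zero (c 0).toFinite).1 ((hcmem 0 (by omega)).2.2)
    rw [hc0, Set.subset_empty_iff, Set.diff_eq_empty] at h0
    have := Set.ncard_le_ncard h0 W.toFinite
    omega
  have build : ∀ W : Set E, IsB R W X → W.ncard = nn → ∀ i, i ≤ p → ¬ (P \ W ⊆ c i) →
      ∃ V, IsB R V X ∧ V.ncard = nn ∧ c i ⊆ V ∧ V ⊆ c i ∪ W := by
    intro W hW hWn i hip hnsub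
    have hciP : c i ⊆ P := (hcmem i hip).2.1
    have hciF : c i ∈ Fm R := (hcmem i hip).1
    have hYX : c i ∪ W ⊆ X := Set.union_subset (hciP.trans hPX) hW.2.1
    have hYne : c i ∪ W ≠ X := by
      intro hYeq
      apply hnsub
      intro x hx
      have hx' : x ∈ c i ∪ W := by rw [hYeq]; exact hPX hx.1
      rcases hx' with h | h
      · exact h
      · exact absurd h hx.2
    have hYss : c i ∪ W ⊂ X := Set.ssubset_iff_subset_ne.2 ⟨hYX, hYne⟩
    have hYlt : (c i ∪ W).ncard < X.ncard := Set.ncard_lt_ncard hYss X.toFinite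
    have hWY : R W (c i ∪ W) := h2 W _ X Set.subset_union_right hYX hW.2.2
    have hYRX : R (c i ∪ W) X := hR.trans (hR.symm hWY) hW.2.2
    obtain ⟨V, hV, hciV⟩ :=
      exists_basis_superset hR h1 h2 h4 hciF (Set.subset_union_left (s := c i) (t := W))
    have hVX : IsB R V X := ⟨hV.1, hV.2.1.trans hYX, hR.trans hV.2.2 hYRX⟩
    have hVn : V.ncard = nn := by
      have := hIH _ hYlt V W hV ⟨hW.1, Set.subset_union_right, hWY⟩
      omega
    exact ⟨V, hVX, hVn, hciV, hV.2.1⟩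
  have ladder : ∀ j, j ≤ nn → ∃ W, IsB R W X ∧ W.ncard = nn ∧ j ≤ sInf {i | P \ W ⊆ c i} := by
    intro j
    induction j with
    | zero => exact fun _ => ⟨N, ⟨hNF, hNX, hRN⟩, rfl, by omega⟩
    | succ j ihj =>
      intro hj
      obtain ⟨W, hW, hWn, hjle⟩ := ihj (by omega)
      by_cases h : j + 1 ≤ sInf {i | P \ W ⊆ c i}
      · exact ⟨W, hW, hWn, h⟩
      · have hiSj : sInf {i | P \ W ⊆ c i} = j := by omega
        have hpos : 1 ≤ j := by
          have := hiS_pos W hW hWn; omega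
        have hnsub : ¬ P \ W ⊆ c (j - 1) := hiS_not W (j - 1) (by omega)
        obtain ⟨V, hVX, hVn, hcV, hVsub⟩ := build W hW hWn (j - 1) (by omega) hnsub
        refine ⟨V, hVX, hVn, ?_⟩
        by_contra hcon
        push_neg at hcon
        have hsub : P \ V ⊆ c j := by
          refine (hiS_mem V).trans (hmono j (by omega) _ (by omega))
        have hdisj : Disjoint (c (j - 1)) (P \ V) := by
          rw [Set.disjoint_left]
          intro x hx hx2
          exact hx2.2 (hcV hx)
        have hsubU : c (j - 1) ∪ (P \ V) ⊆ c j :=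
          Set.union_subset (hmono j (by omega) (j - 1) (by omega)) hsub
        have hcard1 : (c (j - 1) ∪ (P \ V)).ncard = (j - 1) + (P \ V).ncard := by
          rw [Set.ncard_union_eq hdisj, (hcmem (j - 1) (by omega)).2.2]
        have hle2 : (c (j - 1) ∪ (P \ V)).ncard ≤ j := by
          have h6 := Set.ncard_le_ncard hsubU (c j).toFinite
          rwa [(hcmem j (by omega)).2.2] at h6
        have hVP' : ¬ V ⊆ P := notsubP V hVX hVn
        obtain ⟨v, hvV, hvP⟩ := Set.not_subset.1 hVP'
        have hPV : (P ∩ V).ncard < nn := by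
          have hss : P ∩ V ⊂ V := by
            rw [Set.ssubset_iff_subset_ne]
            refine ⟨Set.inter_subset_right, fun h6 => ?_⟩
            rw [← h6] at hvV
            exact hvP hvV.1
          have := Set.ncard_lt_ncard hss V.toFinite; omega
        have hPVcard : (P ∩ V).ncard + (P \ V).ncard = p := Set.ncard_inter_add_ncard_diff_eq_ncard P V
        omega
  obtain ⟨W, hW, hWn, hiSn⟩ := ladder nn le_rfl
  have hnsub : ¬ P \ W ⊆ c (nn - 1) := hiS_not W (nn - 1) (by omega)
  obtain ⟨V, hVX, hVn, hcV, hVsub⟩ := build W hW hWn (nn - 1) (by omega) hnsub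
  set D := c (nn - 1) with hD
  have hDmem := hcmem (nn - 1) (by omega)
  have hDF : D ∈ Fm R := hDmem.1
  have hDP : D ⊆ P := hDmem.2.1
  have hDcard : D.ncard = nn - 1 := hDmem.2.2
  have hdiffcard : (V \ D).ncard = 1 := by
    rw [Set.ncard_diff hcV D.toFinite]
    omega
  obtain ⟨v, hveq⟩ := Set.ncard_eq_one.1 hdiffcard
  have hVeq : V = insert v D := by
    rw [← Set.union_diff_cancel hcV, hveq, Set.union_singleton]
  have hvP : v ∉ P := by
    intro hvP
    refine notsubP V hVX hVn ?_
    rw [hVeq]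
    exact Set.insert_subset hvP hDP
  have hvD : v ∉ D := fun h => hvP (hDP h)
  have f1 : ∀ a ∈ P \ D, insert a D ∉ Fm R := by
    rintro a ⟨haP, haD⟩ hmem
    have hav : a ≠ v := fun h => hvP (h ▸ haP)
    have prem1 : R (insert v D) (insert a (insert v D)) := by
      rw [← hVeq]
      exact h2 V (insert a V) X (Set.subset_insert a V)
        (Set.insert_subset (hPX haP) hVX.2.1) hVX.2.2
    have prem2 : ¬ R (insert a D) (insert a (insert v D)) := by
      intro hcon
      have h5 : R (insert a V) X :=
        conv hR h2 hVX.2.2 (Set.subset_insert a V) (Set.insert_subset (hPX haP) hVX.2.1)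
      have h5' : R (insert a (insert v D)) X := by rw [← hVeq]; exact h5
      have h6 : R (insert a D) X := hR.trans hcon h5'
      have hss : insert a D ⊂ P := by
        rw [Set.ssubset_iff_subset_ne]
        refine ⟨Set.insert_subset haP hDP, fun h7 => ?_⟩
        have h8 : (insert a D).ncard = nn := by
          rw [Set.ncard_insert_of_notMem haD]; omega
        rw [h7] at h8; omega
      exact hPF _ hss (hR.trans hRP (hR.symm h6))
    obtain ⟨z, hz, hzrel⟩ := h4 D a v hav haD hvD prem1 prem2
    exact hmem ((insert a D) \ {z}) (Set.sdiff_singleton_ssubset.2 hz) (hR.symm hzrel)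
  obtain ⟨B₀, hB₀, hDB₀⟩ := exists_basis_superset hR h1 h2 h4 hDF hDP
  have hB₀D : B₀ = D := by
    by_contra hne
    have hssD : D ⊂ B₀ := Set.ssubset_iff_subset_ne.2 ⟨hDB₀, fun h => hne h.symm⟩
    have hlt2 : D.ncard < B₀.ncard := Set.ncard_lt_ncard hssD B₀.toFinite
    have hEqB : Equi R (B₀ ∪ D) := by
      rw [Set.union_eq_self_of_subset_right hDB₀]
      exact hIH B₀ (lt_of_le_of_lt (Set.ncard_le_ncard hB₀.2.1 P.toFinite) hpX)
    obtain ⟨e, he, hins⟩ := exch hR h1 h2 h4 hEqB hB₀.1 hDF hlt2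
    exact f1 e ⟨hB₀.2.1 he.1, he.2⟩ hins
  have hEqP : Equi R P := hIH P hpX
  have hfin := hEqP P B₀ ⟨hPF, subset_rfl, hR.refl P⟩ hB₀
  rw [hB₀D] at hfin
  omega


include hR h1 h2 h4 in
lemma isGreedoid_Fm : IsGreedoid (Fm R) := by
  refine ⟨empty_mem, ?_⟩
  intro U hU V hV hlt
  exact exch hR h1 h2 h4 (equi_all hR h1 h2 h4 (U ∪ V)) hU hV hlt

include hR h1 h2 h4 in
lemma rank_eq_basis {B X : Set E} (hB : IsB R B X) : greedoidRank (Fm R) X = B.ncard := by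
  refine le_antisymm ?_ (le_rank hB.1 hB.2.1)
  refine csSup_le ⟨0, ∅, empty_mem, Set.empty_subset X, Set.ncard_empty E⟩ ?_
  rintro m ⟨A, hA, hAX, rfl⟩
  obtain ⟨B', hB', hAB'⟩ := exists_basis_superset hR h1 h2 h4 hA hAX
  have h5 := equi_all hR h1 h2 h4 X B' B hB' hB
  have h6 := Set.ncard_le_ncard hAB' B'.toFinite
  omega

include hR h1 h2 h4 in
lemma mem_closure_iff {X : Set E} {e : E} :
    e ∈ rankClosure (Fm R) X ↔ R X (insert e X) := by
  obtain ⟨B, hB⟩ := exists_basis hR X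
  have hrX : greedoidRank (Fm R) X = B.ncard := rank_eq_basis hR h1 h2 h4 hB
  constructor
  · intro he
    have hre : greedoidRank (Fm R) (insert e X) = B.ncard := by
      have h5 : greedoidRank (Fm R) (insert e X) = greedoidRank (Fm R) X := he
      omega
    have hmax : ∀ f ∈ (insert e X) \ B, insert f B ∉ Fm R := by
      intro f hf hins
      have hcard : (insert f B).ncard = B.ncard + 1 := Set.ncard_insert_of_notMem hf.2
      have h5 := le_rank hins (Set.insert_subset hf.1 (hB.2.1.trans (Set.subset_insert e X)))
      omega
    have hRB : R B (insert e X) :=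
      basis_of_maximal hR h1 h2 h4 hB.1 (hB.2.1.trans (Set.subset_insert e X)) hmax
    exact hR.trans (hR.symm hB.2.2) hRB
  · intro h
    have hRB : R B (insert e X) := hR.trans hB.2.2 h
    have h5 : greedoidRank (Fm R) (insert e X) = B.ncard :=
      rank_eq_basis hR h1 h2 h4 ⟨hB.1, hB.2.1.trans (Set.subset_insert e X), hRB⟩
    show greedoidRank (Fm R) (insert e X) = greedoidRank (Fm R) X
    omega

include hR h1 h2 h4 in
lemma cospan_iff (X Y : Set E) : R X Y ↔ rankClosure (Fm R) X = rankClosure (Fm R) Y := by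
  have step : ∀ (e : E) (U V : Set E), R U V → R U (insert e U) → R V (insert e V) := by
    intro e U V hUV hfree
    have h3 : R (insert e U) V := hR.trans (hR.symm hfree) hUV
    have h4' : R (insert e U) ((insert e U) ∪ V) := h1 _ _ h3
    have heq : (insert e U) ∪ V = insert e (U ∪ V) := Set.insert_union
    rw [heq] at h4'
    have h5 : R V (insert e (U ∪ V)) := hR.trans (hR.symm h3) h4'
    exact h2 V (insert e V) (insert e (U ∪ V))
      (Set.subset_insert e V) (Set.insert_subset_insert Set.subset_union_right) h5
  constructor
  · intro hXY
    ext e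
    rw [mem_closure_iff hR h1 h2 h4, mem_closure_iff hR h1 h2 h4]
    exact ⟨step e X Y hXY, step e Y X (hR.symm hXY)⟩
  · intro h
    have hXs : ∀ e ∈ X, R Y (insert e Y) := by
      intro e he
      have h5 : e ∈ rankClosure (Fm R) X := by
        rw [mem_closure_iff hR h1 h2 h4, Set.insert_eq_self.2 he]
        exact hR.refl X
      rw [h] at h5
      exact (mem_closure_iff hR h1 h2 h4).1 h5
    have hYs : ∀ e ∈ Y, R X (insert e X) := by
      intro e he
      have h5 : e ∈ rankClosure (Fm R) Y := by
        rw [mem_closure_iff hR h1 h2 h4, Set.insert_eq_self.2 he]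
        exact hR.refl Y
      rw [← h] at h5
      exact (mem_closure_iff hR h1 h2 h4).1 h5
    have hYX : R Y (Y ∪ X) := free_union hR h1 h2 h4 X hXs
    have hXY : R X (X ∪ Y) := free_union hR h1 h2 h4 Y hYs
    have hYX' : R (X ∪ Y) Y := by
      rw [Set.union_comm]
      exact hR.symm hYX
    exact hR.trans hXY hYX'


end S14

theorem stmt14 {E : Type*} [Fintype E] (R : Set E → Set E → Prop) (hR : Equivalence R) :
    ((∃ F : Set (Set E), IsGreedoid F ∧
        ∀ X Y : Set E, R X Y ↔ rankClosure F X = rankClosure F Y) ↔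
      ((∀ X Y : Set E, R X Y → R X (X ∪ Y)) ∧
       (∀ X Y Z : Set E, X ⊆ Y → Y ⊆ Z → R X Z → R X Y) ∧
       (∀ (X : Set E) (x y : E), x ≠ y → x ∉ X → y ∉ X →
         R (insert y X) (insert x (insert y X)) →
         ¬ R (insert x X) (insert x (insert y X)) →
         ∃ z ∈ insert x X, R ((insert x X) \ {z}) (insert x X)))) ∧
    (∀ F : Set (Set E), IsGreedoid F →
      (∀ X Y : Set E, R X Y ↔ rankClosure F X = rankClosure F Y) →
      F = {X : Set E | ∀ Y : Set E, Y ⊂ X → ¬ R X Y}) := by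
  constructor
  · constructor
    · rintro ⟨F, hF, hcos⟩
      refine ⟨?_, ?_, ?_⟩
      · intro X Y h
        rw [hcos] at h ⊢
        exact S14.forward_R1 hF h
      · intro X Y Z hXY hYZ h
        rw [hcos] at h ⊢
        exact S14.forward_R2 hF hXY hYZ h
      · intro X x y hxy hx hy hA hB
        rw [hcos] at hA hB
        obtain ⟨z, hz, hrel⟩ := S14.forward_R4 hF hxy hx hy hA hB
        exact ⟨z, hz, (hcos _ _).2 hrel⟩
    · rintro ⟨h1, h2, h4⟩
      exact ⟨S14.Fm R, S14.isGreedoid_Fm hR h1 h2 h4, fun X Y => S14.cospan_iff hR h1 h2 h4 X Y⟩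
  · intro F hF hcos
    exact S14.moreover hF hcos
end

section
/- Let (E, F) be a greedoid with rank closure operator σ. Then (E, F) is an antimatroid (i.e., F is closed under union) if and only if (E, σ) is uniquely generated, meaning every X ⊆ E has a unique inclusion-minimal set B with σ(B) = σ(X). -/
namespace Stmt16Aux

set_option linter.unusedSectionVars false
set_option linter.unusedVariables false

variable {E : Type*} [Fintype E] {F : Set (Set E)}

lemma mem_rankClosure_iff {X : Set E} {x : E} :
    x ∈ rankClosure F X ↔ greedoidRank F (insert x X) = greedoidRank F X := Iff.rfl

lemma rank_bddAbove (X : Set E) : BddAbove {n | ∃ A ∈ F, A ⊆ X ∧ A.ncard = n} := by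
  refine ⟨Fintype.card E, ?_⟩
  rintro n ⟨A, -, -, rfl⟩
  have := Set.ncard_le_ncard (Set.subset_univ A) Set.finite_univ
  simpa [Set.ncard_univ, Nat.card_eq_fintype_card] using this

lemma le_rank {X A : Set E} (hA : A ∈ F) (hAX : A ⊆ X) :
    A.ncard ≤ greedoidRank F X :=
  le_csSup (rank_bddAbove X) ⟨A, hA, hAX, rfl⟩

lemma rank_spec (h0 : (∅ : Set E) ∈ F) (X : Set E) :
    ∃ A ∈ F, A ⊆ X ∧ A.ncard = greedoidRank F X := by
  have hne : {n | ∃ A ∈ F, A ⊆ X ∧ A.ncard = n}.Nonempty :=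
    ⟨0, ∅, h0, Set.empty_subset X, Set.ncard_empty E⟩
  exact Nat.sSup_mem hne (rank_bddAbove X)

lemma rank_le_ncard (h0 : (∅ : Set E) ∈ F) (X : Set E) :
    greedoidRank F X ≤ X.ncard := by
  obtain ⟨A, _, hAX, hcard⟩ := rank_spec h0 X
  rw [← hcard]
  exact Set.ncard_le_ncard hAX (Set.toFinite X)

lemma rank_mono (h0 : (∅ : Set E) ∈ F) {X Y : Set E} (h : X ⊆ Y) :
    greedoidRank F X ≤ greedoidRank F Y := by
  obtain ⟨A, hA, hAX, hcard⟩ := rank_spec h0 X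
  rw [← hcard]
  exact le_rank hA (hAX.trans h)

lemma subset_rankClosure (X : Set E) : X ⊆ rankClosure F X := fun x hx => by
  simp [rankClosure, Set.insert_eq_of_mem hx]

lemma rank_feasible (h0 : (∅ : Set E) ∈ F) {A : Set E} (hA : A ∈ F) :
    greedoidRank F A = A.ncard :=
  le_antisymm (rank_le_ncard h0 A) (le_rank hA subset_rfl)

lemma rank_rankClosure (hF : IsGreedoid F) (X : Set E) :
    greedoidRank F (rankClosure F X) = greedoidRank F X := by
  refine le_antisymm ?_ (rank_mono hF.1 (subset_rankClosure X))
  by_contra h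
  have hlt : greedoidRank F X < greedoidRank F (rankClosure F X) :=
    lt_of_le_of_ne (rank_mono hF.1 (subset_rankClosure X)) (fun e => h e.symm.le)
  obtain ⟨A, hA, hAS, hAcard⟩ := rank_spec hF.1 (rankClosure F X)
  obtain ⟨B, hB, hBX, hBcard⟩ := rank_spec hF.1 X
  obtain ⟨x, hxAB, hxB⟩ := hF.2 A hA B hB (by omega)
  have hxS : greedoidRank F (insert x X) = greedoidRank F X := hAS hxAB.1
  have hle : (insert x B).ncard ≤ greedoidRank F (insert x X) :=
    le_rank hxB (Set.insert_subset_insert hBX)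
  have hins : (insert x B).ncard = B.ncard + 1 :=
    Set.ncard_insert_of_notMem hxAB.2 (Set.toFinite B)
  omega

/-- Existence of a minimal generator inside any set. -/
lemma exists_min_gen (X : Set E) :
    ∃ C, C ⊆ X ∧ rankClosure F C = rankClosure F X ∧
      ∀ D, D ⊂ C → rankClosure F D ≠ rankClosure F X := by
  have aux : ∀ n (B : Set E), B.ncard ≤ n →
      ∃ C, C ⊆ B ∧ rankClosure F C = rankClosure F B ∧
        ∀ D, D ⊂ C → rankClosure F D ≠ rankClosure F B := by
    intro n
    induction n with
    | zero =>
      intro B hB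
      have hBe : B = ∅ := Set.ncard_eq_zero (Set.toFinite B) |>.mp (Nat.le_zero.mp hB)
      refine ⟨B, subset_rfl, rfl, ?_⟩
      intro D hD _
      rw [hBe] at hD
      exact hD.ne (Set.subset_empty_iff.mp hD.subset)
    | succ n ih =>
      intro B hB
      by_cases hmin : ∀ D, D ⊂ B → rankClosure F D ≠ rankClosure F B
      · exact ⟨B, subset_rfl, rfl, hmin⟩
      · push_neg at hmin
        obtain ⟨D, hDB, hDσ⟩ := hmin
        have hcard : D.ncard ≤ n := by
          have := Set.ncard_lt_ncard hDB (Set.toFinite B)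
          omega
        obtain ⟨C, hCD, hCσ, hCmin⟩ := ih D hcard
        exact ⟨C, hCD.trans hDB.subset, hCσ.trans hDσ,
          fun D' hD' h => hCmin D' hD' (h.trans hDσ.symm)⟩
  exact aux X.ncard X le_rfl

/-- In an antimatroid, closure-equal sets have closure-equal intersection. -/
lemma closure_inter (hF : IsGreedoid F) (hU : ∀ A ∈ F, ∀ B ∈ F, A ∪ B ∈ F)
    {X Y : Set E} (h : rankClosure F X = rankClosure F Y) :
    rankClosure F (X ∩ Y) = rankClosure F X := by
  have hrXY : greedoidRank F X = greedoidRank F Y := by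
    rw [← rank_rankClosure hF X, h, rank_rankClosure hF Y]
  obtain ⟨K, hK, hKX, hKcard⟩ := rank_spec hF.1 X
  obtain ⟨K', hK', hKY, hK'card⟩ := rank_spec hF.1 Y
  -- key : maximal feasible subsets of the closure coincide
  have key : ∀ P Q : Set E, P ∈ F → Q ∈ F → P ⊆ rankClosure F X → Q ⊆ rankClosure F X →
      P.ncard = greedoidRank F X → Q ⊆ P := by
    intro P Q hP hQ hPc hQc hPcard
    have hPQ : Q ∪ P ∈ F := hU Q hQ P hP
    have hle : (Q ∪ P).ncard ≤ greedoidRank F X := by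
      have h2 := le_rank hPQ (Set.union_subset hQc hPc)
      rwa [rank_rankClosure hF X] at h2
    have heq : P = Q ∪ P :=
      Set.eq_of_subset_of_ncard_le Set.subset_union_right (by omega) (Set.toFinite _)
    rw [heq]
    exact Set.subset_union_left
  have hKc : K ⊆ rankClosure F X := hKX.trans (subset_rankClosure X)
  have hK'c : K' ⊆ rankClosure F X := h ▸ hKY.trans (subset_rankClosure Y)
  have hKK' : K' ⊆ K := key K K' hK hK' hKc hK'c hKcard
  have hK'K : K ⊆ K' := key K' K hK' hK hK'c hKc (by omega)
  have hKeq : K = K' := subset_antisymm hK'K hKK'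
  have hKXY : K ⊆ X ∩ Y := Set.subset_inter hKX (hKeq ▸ hKY)
  have hrI : greedoidRank F (X ∩ Y) = K.ncard := by
    refine le_antisymm ?_ (le_rank hK hKXY)
    rw [hKcard]
    exact rank_mono hF.1 Set.inter_subset_left
  ext z
  rw [mem_rankClosure_iff, mem_rankClosure_iff]
  constructor
  · intro hz
    by_cases hzX : z ∈ X
    · rw [Set.insert_eq_of_mem hzX]
    · by_contra hne
      have hlt : greedoidRank F X < greedoidRank F (insert z X) :=
        lt_of_le_of_ne (rank_mono hF.1 (Set.subset_insert z X)) (fun e => hne e.symm)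
      obtain ⟨D, hD, hDsub, hDcard⟩ := rank_spec hF.1 (insert z X)
      have hMF : D ∪ K ∈ F := hU D hD K hK
      have hMsub : D ∪ K ⊆ insert z X :=
        Set.union_subset hDsub (hKX.trans (Set.subset_insert z X))
      have hcardlt : K.ncard < (D ∪ K).ncard := by
        have h1 : D.ncard ≤ (D ∪ K).ncard :=
          Set.ncard_le_ncard Set.subset_union_left (Set.toFinite _)
        omega
      obtain ⟨x, hxMK, hxK⟩ := hF.2 (D ∪ K) hMF K hK hcardlt
      have hxins : (insert x K).ncard = K.ncard + 1 :=
        Set.ncard_insert_of_notMem hxMK.2 (Set.toFinite K)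
      rcases hMsub hxMK.1 with hxz | hxX
      · -- x = z
        subst hxz
        have : (insert x K).ncard ≤ greedoidRank F (insert x (X ∩ Y)) :=
          le_rank hxK (Set.insert_subset_insert hKXY)
        rw [hz, hrI] at this
        omega
      · -- x ∈ X
        have : (insert x K).ncard ≤ greedoidRank F X :=
          le_rank hxK (Set.insert_subset hxX hKX)
        omega
  · intro hz
    by_cases hzXY : z ∈ X ∩ Y
    · rw [Set.insert_eq_of_mem hzXY]
    · by_contra hne
      have hlt : greedoidRank F (X ∩ Y) < greedoidRank F (insert z (X ∩ Y)) :=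
        lt_of_le_of_ne (rank_mono hF.1 (Set.subset_insert z (X ∩ Y))) (fun e => hne e.symm)
      obtain ⟨D, hD, hDsub, hDcard⟩ := rank_spec hF.1 (insert z (X ∩ Y))
      have hMF : D ∪ K ∈ F := hU D hD K hK
      have hMsub : D ∪ K ⊆ insert z (X ∩ Y) :=
        Set.union_subset hDsub (hKXY.trans (Set.subset_insert z (X ∩ Y)))
      have hcardlt : K.ncard < (D ∪ K).ncard := by
        have h1 : D.ncard ≤ (D ∪ K).ncard :=
          Set.ncard_le_ncard Set.subset_union_left (Set.toFinite _)
        omega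
      obtain ⟨x, hxMK, hxK⟩ := hF.2 (D ∪ K) hMF K hK hcardlt
      have hxins : (insert x K).ncard = K.ncard + 1 :=
        Set.ncard_insert_of_notMem hxMK.2 (Set.toFinite K)
      rcases hMsub hxMK.1 with hxz | hxXY
      · -- x = z
        subst hxz
        have : (insert x K).ncard ≤ greedoidRank F (insert x X) :=
          le_rank hxK (Set.insert_subset (Set.mem_insert x X)
            (hKX.trans (Set.subset_insert x X)))
        rw [hz, ← hKcard] at this
        omega
      · -- x ∈ X ∩ Y
        have : (insert x K).ncard ≤ greedoidRank F X :=
          le_rank hxK (Set.insert_subset hxXY.1 hKX)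
        omega

/-- Inclusion-maximality of intersection-maximal pairs. -/
lemma union_max_left {A B : Set E} (hA : A ∈ F) (hB : B ∈ F)
    (hI : ∀ A' ∈ F, ∀ B' ∈ F, A' ∪ B' = A ∪ B → (A' ∩ B').ncard ≤ (A ∩ B).ncard)
    {C : Set E} (hC : C ∈ F) (hAC : A ⊆ C) (hCM : C ⊆ A ∪ B) : C = A := by
  have hUeq : C ∪ B = A ∪ B :=
    subset_antisymm (Set.union_subset hCM Set.subset_union_right)
      (Set.union_subset (hAC.trans Set.subset_union_left) Set.subset_union_right)
  have hle := hI C hC B hB hUeq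
  have hsub : A ∩ B ⊆ C ∩ B := Set.inter_subset_inter_left B hAC
  have heq : A ∩ B = C ∩ B := Set.eq_of_subset_of_ncard_le hsub hle (Set.toFinite _)
  refine subset_antisymm ?_ hAC
  intro x hx
  rcases hCM hx with h | h
  · exact h
  · have : x ∈ C ∩ B := ⟨hx, h⟩
    rw [← heq] at this
    exact this.1

/-- Key transfer lemma for the converse direction. -/
lemma closure_transfer (hF : IsGreedoid F) {A B : Set E} (hA : A ∈ F) (hB : B ∈ F)
    (hM : A ∪ B ∉ F)
    (hN : ∀ A' ∈ F, ∀ B' ∈ F, A' ∪ B' ∉ F → (A' ∪ B').ncard ≤ (A ∪ B).ncard)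
    (hI : ∀ A' ∈ F, ∀ B' ∈ F, A' ∪ B' = A ∪ B → (A' ∩ B').ncard ≤ (A ∩ B).ncard)
    {z : E} (hz : z ∈ rankClosure F A) : z ∈ rankClosure F B := by
  have hIB : ∀ A' ∈ F, ∀ B' ∈ F, A' ∪ B' = B ∪ A → (A' ∩ B').ncard ≤ (B ∩ A).ncard := by
    intro A' hA' B' hB' he
    rw [Set.inter_comm B A]
    exact hI A' hA' B' hB' (by rwa [Set.union_comm A B])
  rw [mem_rankClosure_iff] at hz ⊢
  by_cases hzB : z ∈ B
  · rw [Set.insert_eq_of_mem hzB]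
  by_contra hne
  have hltB : greedoidRank F B < greedoidRank F (insert z B) :=
    lt_of_le_of_ne (rank_mono hF.1 (Set.subset_insert z B)) (fun e => hne e.symm)
  have hrB : greedoidRank F B = B.ncard := rank_feasible hF.1 hB
  -- insert z B is feasible
  obtain ⟨D, hD, hDsub, hDcard⟩ := rank_spec hF.1 (insert z B)
  obtain ⟨x, hxDB, hxB⟩ := hF.2 D hD B hB (by omega)
  have hxz : x = z := by
    rcases hDsub hxDB.1 with h | h
    · exact h
    · exact absurd h hxDB.2
  subst hxz
  -- now `insert x B ∈ F`
  by_cases hxA : x ∈ A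
  · -- insert x B ⊆ A ∪ B, contradicting maximality of B
    have hsub : insert x B ⊆ B ∪ A := by
      rw [Set.union_comm]
      exact Set.insert_subset (Set.mem_union_left B hxA) Set.subset_union_right
    have heq : insert x B = B :=
      union_max_left hB hA hIB hxB (Set.subset_insert x B) hsub
    refine hzB ?_
    rw [← heq]
    exact Set.mem_insert x B
  · -- x ∉ A ∪ B : then insert x (A ∪ B) must be feasible by maximality of |A ∪ B|
    have hxM : x ∉ A ∪ B := fun h => h.elim hxA hzB
    have hMz : insert x (A ∪ B) ∈ F := by
      by_contra hMz
      have h1 : A ∪ insert x B = insert x (A ∪ B) := Set.union_insert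
      have := hN A hA (insert x B) hxB (by rw [h1]; exact hMz)
      rw [h1] at this
      have h2 : (insert x (A ∪ B)).ncard = (A ∪ B).ncard + 1 :=
        Set.ncard_insert_of_notMem hxM (Set.toFinite _)
      omega
    have hcardlt : A.ncard < (insert x (A ∪ B)).ncard := by
      have h1 : A.ncard ≤ (A ∪ B).ncard :=
        Set.ncard_le_ncard Set.subset_union_left (Set.toFinite _)
      have h2 : (insert x (A ∪ B)).ncard = (A ∪ B).ncard + 1 :=
        Set.ncard_insert_of_notMem hxM (Set.toFinite _)
      omega
    obtain ⟨y, hyMA, hyA⟩ := hF.2 (insert x (A ∪ B)) hMz A hA hcardlt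
    by_cases hyx : y = x
    · -- insert x A feasible, contradicting z ∈ σ A
      subst hyx
      have hyAx : y ∉ A := hyMA.2
      have : (insert y A).ncard ≤ greedoidRank F (insert y A) :=
        le_rank hyA subset_rfl
      rw [hz, rank_feasible hF.1 hA] at this
      have : (insert y A).ncard = A.ncard + 1 :=
        Set.ncard_insert_of_notMem hyAx (Set.toFinite A)
      omega
    · -- y ∈ A ∪ B, contradicting maximality of A
      have hyM : y ∈ A ∪ B := by
        rcases hyMA.1 with h | h
        · exact absurd h hyx
        · exact h
      have heq : insert y A = A :=
        union_max_left hA hB hI hyA (Set.subset_insert y A)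
          (Set.insert_subset hyM Set.subset_union_left)
      refine hyMA.2 ?_
      rw [← heq]
      exact Set.mem_insert y A

end Stmt16Aux

open Stmt16Aux in
theorem stmt16 {E : Type*} [Fintype E] (F : Set (Set E)) (hF : IsGreedoid F) :
    (∀ A ∈ F, ∀ B ∈ F, A ∪ B ∈ F) ↔
      (∀ X : Set E, ∃! B : Set E,
        rankClosure F B = rankClosure F X ∧
        ∀ C : Set E, C ⊂ B → rankClosure F C ≠ rankClosure F X) := by
  constructor
  · -- antimatroid ⇒ uniquely generated
    intro hU X
    obtain ⟨B0, hB0X, hB0σ, hB0min⟩ := exists_min_gen (F := F) X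
    refine ⟨B0, ⟨hB0σ, hB0min⟩, ?_⟩
    rintro B' ⟨hB'σ, hB'min⟩
    have hσ : rankClosure F B' = rankClosure F B0 := hB'σ.trans hB0σ.symm
    have hint : rankClosure F (B' ∩ B0) = rankClosure F B' := closure_inter hF hU hσ
    have h1 : B' ∩ B0 = B' := by
      by_contra hne
      exact hB'min (B' ∩ B0) (ssubset_of_subset_of_ne Set.inter_subset_left hne)
        (hint.trans hB'σ)
    have hint2 : rankClosure F (B0 ∩ B') = rankClosure F B0 :=
      closure_inter hF hU hσ.symm
    have h2 : B0 ∩ B' = B0 := by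
      by_contra hne
      exact hB0min (B0 ∩ B') (ssubset_of_subset_of_ne Set.inter_subset_left hne)
        (hint2.trans hB0σ)
    rw [← h1, Set.inter_comm, h2]
  · -- uniquely generated ⇒ antimatroid
    intro hUG A0 hA0 B0 hB0
    by_contra hbad0
    classical
    -- maximize the size of a bad union
    set badU : Set ℕ :=
      {n | ∃ A' ∈ F, ∃ B' ∈ F, A' ∪ B' ∉ F ∧ (A' ∪ B').ncard = n} with hbadU
    have hne : badU.Nonempty := ⟨(A0 ∪ B0).ncard, A0, hA0, B0, hB0, hbad0, rfl⟩
    have hbdd : BddAbove badU := by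
      refine ⟨Fintype.card E, ?_⟩
      rintro n ⟨A', -, B', -, -, rfl⟩
      have := Set.ncard_le_ncard (Set.subset_univ (A' ∪ B')) Set.finite_univ
      simpa [Set.ncard_univ, Nat.card_eq_fintype_card] using this
    obtain ⟨A1, hA1, B1, hB1, hbad1, hcard1⟩ := Nat.sSup_mem hne hbdd
    have hNmax : ∀ A' ∈ F, ∀ B' ∈ F, A' ∪ B' ∉ F →
        (A' ∪ B').ncard ≤ (A1 ∪ B1).ncard := by
      intro A' hA' B' hB' hb
      rw [hcard1]
      exact le_csSup hbdd ⟨A', hA', B', hB', hb, rfl⟩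
    -- maximize the intersection among pairs with the same union
    set badI : Set ℕ :=
      {k | ∃ A' ∈ F, ∃ B' ∈ F, A' ∪ B' = A1 ∪ B1 ∧ (A' ∩ B').ncard = k} with hbadI
    have hneI : badI.Nonempty := ⟨(A1 ∩ B1).ncard, A1, hA1, B1, hB1, rfl, rfl⟩
    have hbddI : BddAbove badI := by
      refine ⟨Fintype.card E, ?_⟩
      rintro n ⟨A', -, B', -, -, rfl⟩
      have := Set.ncard_le_ncard (Set.subset_univ (A' ∩ B')) Set.finite_univ
      simpa [Set.ncard_univ, Nat.card_eq_fintype_card] using this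
    obtain ⟨A, hA, B, hB, hUeq, hIcard⟩ := Nat.sSup_mem hneI hbddI
    have hMbad : A ∪ B ∉ F := hUeq ▸ hbad1
    have hN : ∀ A' ∈ F, ∀ B' ∈ F, A' ∪ B' ∉ F →
        (A' ∪ B').ncard ≤ (A ∪ B).ncard := by
      intro A' hA' B' hB' hb
      rw [hUeq]
      exact hNmax A' hA' B' hB' hb
    have hI : ∀ A' ∈ F, ∀ B' ∈ F, A' ∪ B' = A ∪ B →
        (A' ∩ B').ncard ≤ (A ∩ B).ncard := by
      intro A' hA' B' hB' he
      rw [hIcard]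
      exact le_csSup hbddI ⟨A', hA', B', hB', he.trans hUeq, rfl⟩
    -- A ⊄ B
    have hnAB : ¬ A ⊆ B := by
      intro h
      exact hMbad (by rwa [Set.union_eq_self_of_subset_left h])
    -- symmetric versions of hypotheses
    have hMbad' : B ∪ A ∉ F := by rwa [Set.union_comm]
    have hN' : ∀ A' ∈ F, ∀ B' ∈ F, A' ∪ B' ∉ F →
        (A' ∪ B').ncard ≤ (B ∪ A).ncard := by
      intro A' hA' B' hB' hb
      rw [Set.union_comm B A]
      exact hN A' hA' B' hB' hb
    have hI' : ∀ A' ∈ F, ∀ B' ∈ F, A' ∪ B' = B ∪ A →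
        (A' ∩ B').ncard ≤ (B ∩ A).ncard := by
      intro A' hA' B' hB' he
      rw [Set.inter_comm B A]
      exact hI A' hA' B' hB' (by rwa [Set.union_comm A B])
    -- closures of A and B coincide
    have hσAB : rankClosure F A = rankClosure F B := by
      ext z
      constructor
      · exact fun hz => closure_transfer hF hA hB hMbad hN hI hz
      · exact fun hz => closure_transfer hF hB hA hMbad' hN' hI' hz
    -- minimal generators inside A and B must coincide
    obtain ⟨C, hCA, hCσ, hCmin⟩ := exists_min_gen (F := F) A
    obtain ⟨C', hC'B, hC'σ, hC'min⟩ := exists_min_gen (F := F) B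
    obtain ⟨Bs, hBs, huniq⟩ := hUG A
    have h1 : C = Bs := huniq C ⟨hCσ, hCmin⟩
    have h2 : C' = Bs := by
      refine huniq C' ⟨hC'σ.trans hσAB.symm, ?_⟩
      intro D hD hDσ
      exact hC'min D hD (hDσ.trans hσAB)
    have hCC' : C = C' := h1.trans h2.symm
    have hCsub : C ⊆ A ∩ B := Set.subset_inter hCA (hCC' ▸ hC'B)
    -- rank computation: r C = r A = |A|
    have hrC : greedoidRank F C = A.ncard := by
      have e1 : greedoidRank F (rankClosure F C) = greedoidRank F C :=
        rank_rankClosure hF C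
      have e2 : greedoidRank F (rankClosure F A) = greedoidRank F A :=
        rank_rankClosure hF A
      rw [hCσ] at e1
      rw [← e1, e2, rank_feasible hF.1 hA]
    have hrCle : greedoidRank F C ≤ C.ncard := rank_le_ncard hF.1 C
    have hlt : C.ncard < A.ncard := by
      have h3 : C.ncard ≤ (A ∩ B).ncard := Set.ncard_le_ncard hCsub (Set.toFinite _)
      have h4 : (A ∩ B).ncard < A.ncard :=
        Set.ncard_lt_ncard (ssubset_of_subset_of_ne Set.inter_subset_left
          (fun e => hnAB (e ▸ Set.inter_subset_right))) (Set.toFinite A)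
      omega
    omega
end

section
/- Let E be a finite set and R an equivalence relation on 2^E. Then R is the cospanning relation of an antimatroid on E (i.e., there exists an antimatroid (E, F) with rank closure operator σ such that (X, Y) ∈ R iff σ(X) = σ(Y)) if and only if R satisfies, for all X, Y, Z ⊆ E and distinct x, y ∉ X: (R1) (X, Y) ∈ R implies (X, X ∪ Y) ∈ R; (R2) X ⊆ Y ⊆ Z and (X, Z) ∈ R imply (X, Y) ∈ R; (R3) (X, Y) ∈ R implies (X, X ∩ Y) ∈ R; and (R4) if (X ∪ {y}, X ∪ {x, y}) ∈ R but (X ∪ {x}, X ∪ {x, y}) ∉ R, then there exists z ∈ X ∪ {x} with (X ∪ {x} \ {z}, X ∪ {x}) ∈ R. -/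
namespace Stmt17Aux

variable {E : Type*} [Fintype E]

/-- `A` is the (unique) maximum feasible subset of `X`. -/
def IsBasis (F : Set (Set E)) (X A : Set E) : Prop :=
  A ∈ F ∧ A ⊆ X ∧ ∀ B ∈ F, B ⊆ X → B ⊆ A

theorem exists_basis {F : Set (Set E)} (h0 : ∅ ∈ F)
    (hU : ∀ A ∈ F, ∀ B ∈ F, A ∪ B ∈ F) (X : Set E) : ∃ A, IsBasis F X A := by
  have hfin : {A | A ∈ F ∧ A ⊆ X}.Finite := Set.toFinite _
  have hne : {A | A ∈ F ∧ A ⊆ X}.Nonempty := ⟨∅, h0, Set.empty_subset X⟩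
  obtain ⟨A, hA, hmax⟩ := Set.Finite.exists_maximalFor Set.ncard _ hfin hne
  refine ⟨A, hA.1, hA.2, fun B hB hBX => ?_⟩
  have hmem : A ∪ B ∈ {A | A ∈ F ∧ A ⊆ X} := ⟨hU _ hA.1 _ hB, Set.union_subset hA.2 hBX⟩
  have hle : A.ncard ≤ (A ∪ B).ncard := Set.ncard_le_ncard Set.subset_union_left (Set.toFinite _)
  have heq : A = A ∪ B :=
    Set.eq_of_subset_of_ncard_le Set.subset_union_left (hmax hmem hle)
      (Set.toFinite _)
  exact heq ▸ Set.subset_union_right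

theorem basis_unique {F : Set (Set E)} {X A B : Set E} (hA : IsBasis F X A)
    (hB : IsBasis F X B) : A = B :=
  Set.Subset.antisymm (hB.2.2 A hA.1 hA.2.1) (hA.2.2 B hB.1 hB.2.1)

open Classical in
noncomputable def bas (F : Set (Set E)) (X : Set E) : Set E :=
  if h : ∃ A, IsBasis F X A then h.choose else ∅

variable {F : Set (Set E)}

theorem bas_isBasis (h0 : ∅ ∈ F) (hU : ∀ A ∈ F, ∀ B ∈ F, A ∪ B ∈ F) (X : Set E) :
    IsBasis F X (bas F X) := by
  have h := exists_basis h0 hU X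
  rw [bas, dif_pos h]
  exact h.choose_spec

theorem bas_mono (h0 : ∅ ∈ F) (hU : ∀ A ∈ F, ∀ B ∈ F, A ∪ B ∈ F) {X Y : Set E}
    (hXY : X ⊆ Y) : bas F X ⊆ bas F Y :=
  (bas_isBasis h0 hU Y).2.2 _ (bas_isBasis h0 hU X).1 ((bas_isBasis h0 hU X).2.1.trans hXY)

theorem rank_eq (h0 : ∅ ∈ F) (hU : ∀ A ∈ F, ∀ B ∈ F, A ∪ B ∈ F) (X : Set E) :
    greedoidRank F X = (bas F X).ncard := by
  obtain ⟨hmem, hsub, hmax⟩ := bas_isBasis h0 hU X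
  refine le_antisymm ?_ ?_
  · refine csSup_le ⟨0, ∅, h0, Set.empty_subset X, Set.ncard_empty _⟩ ?_
    rintro n ⟨A, hA, hAX, rfl⟩
    exact Set.ncard_le_ncard (hmax A hA hAX) (Set.toFinite _)
  · refine le_csSup ⟨(bas F X).ncard, ?_⟩ ⟨bas F X, hmem, hsub, rfl⟩
    rintro n ⟨A, hA, hAX, rfl⟩
    exact Set.ncard_le_ncard (hmax A hA hAX) (Set.toFinite _)

theorem mem_rankClosure_iff (h0 : ∅ ∈ F) (hU : ∀ A ∈ F, ∀ B ∈ F, A ∪ B ∈ F)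
    {X : Set E} {x : E} : x ∈ rankClosure F X ↔ bas F (insert x X) = bas F X := by
  show greedoidRank F (insert x X) = greedoidRank F X ↔ _
  rw [rank_eq h0 hU, rank_eq h0 hU]
  constructor
  · intro h
    exact (Set.eq_of_subset_of_ncard_le (bas_mono h0 hU (Set.subset_insert x X)) (le_of_eq h)
      (Set.toFinite _)).symm
  · intro h; rw [h]

theorem subset_rankClosure (F : Set (Set E)) (X : Set E) : X ⊆ rankClosure F X := by
  intro x hx
  show greedoidRank F (insert x X) = greedoidRank F X
  rw [Set.insert_eq_self.mpr hx]

theorem aug (hG : IsGreedoid F) {A B : Set E} (hAB : A ⊆ B) (hA : A ∈ F) (hB : B ∈ F)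
    (hne : A ≠ B) : ∃ x ∈ B \ A, insert x A ∈ F :=
  hG.2 B hB A hA (Set.ncard_lt_ncard (hAB.ssubset_of_ne hne) (Set.toFinite B))

theorem bas_rankClosure (hG : IsGreedoid F) (hU : ∀ A ∈ F, ∀ B ∈ F, A ∪ B ∈ F) (X : Set E) :
    bas F (rankClosure F X) = bas F X := by
  have h0 := hG.1
  have hsub : bas F X ⊆ bas F (rankClosure F X) := bas_mono h0 hU (subset_rankClosure F X)
  by_contra hne
  obtain ⟨x, hx, hins⟩ := aug hG hsub (bas_isBasis h0 hU X).1 (bas_isBasis h0 hU _).1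
    (fun h => hne h.symm)
  have hxσ : x ∈ rankClosure F X := (bas_isBasis h0 hU _).2.1 hx.1
  have hbx : bas F (insert x X) = bas F X := (mem_rankClosure_iff h0 hU).mp hxσ
  have hsub2 : insert x (bas F X) ⊆ bas F (insert x X) :=
    (bas_isBasis h0 hU (insert x X)).2.2 _ hins
      (Set.insert_subset_insert (bas_isBasis h0 hU X).2.1)
  rw [hbx] at hsub2
  exact hx.2 (hsub2 (Set.mem_insert x _))

theorem cospan_iff (hG : IsGreedoid F) (hU : ∀ A ∈ F, ∀ B ∈ F, A ∪ B ∈ F) {X Y : Set E} :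
    rankClosure F X = rankClosure F Y ↔ bas F X = bas F Y := by
  have h0 := hG.1
  constructor
  · intro h
    rw [← bas_rankClosure hG hU X, h, bas_rankClosure hG hU Y]
  · intro h
    have key : ∀ {U V : Set E}, bas F U = bas F V → rankClosure F U ⊆ rankClosure F V := by
      intro U V h x hx
      rw [mem_rankClosure_iff h0 hU] at hx ⊢
      have hsub : bas F V ⊆ bas F (insert x V) := bas_mono h0 hU (Set.subset_insert x V)
      by_contra hne
      obtain ⟨z, hz, hins⟩ := aug hG hsub (bas_isBasis h0 hU V).1 (bas_isBasis h0 hU _).1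
        (fun hh => hne hh.symm)
      have hzV : z ∈ insert x V := (bas_isBasis h0 hU _).2.1 hz.1
      rcases Set.mem_insert_iff.mp hzV with rfl | hzV'
      · -- z = x
        have h1 : insert z (bas F V) ⊆ bas F (insert z U) := by
          refine (bas_isBasis h0 hU (insert z U)).2.2 _ hins ?_
          rw [← h]
          exact Set.insert_subset_insert (bas_isBasis h0 hU U).2.1
        rw [hx, h] at h1
        exact hz.2 (h1 (Set.mem_insert z _))
      · have h1 : insert z (bas F V) ⊆ bas F V :=
          (bas_isBasis h0 hU V).2.2 _ hins
            (Set.insert_subset hzV' (bas_isBasis h0 hU V).2.1)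
        exact hz.2 (h1 (Set.mem_insert z _))
    exact Set.Subset.antisymm (key h) (key h.symm)

end Stmt17Aux
theorem stmt17 {E : Type*} [Fintype E] (R : Set E → Set E → Prop) (hR : Equivalence R) :
    (∃ F : Set (Set E), IsGreedoid F ∧ (∀ A ∈ F, ∀ B ∈ F, A ∪ B ∈ F) ∧
        ∀ X Y : Set E, R X Y ↔ rankClosure F X = rankClosure F Y) ↔
      ((∀ X Y : Set E, R X Y → R X (X ∪ Y)) ∧
       (∀ X Y Z : Set E, X ⊆ Y → Y ⊆ Z → R X Z → R X Y) ∧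
       (∀ X Y : Set E, R X Y → R X (X ∩ Y)) ∧
       (∀ (X : Set E) (x y : E), x ≠ y → x ∉ X → y ∉ X →
         R (insert y X) (insert x (insert y X)) →
         ¬ R (insert x X) (insert x (insert y X)) →
         ∃ z ∈ insert x X, R ((insert x X) \ {z}) (insert x X))) := by
  open Stmt17Aux in
  constructor
  · -- Forward: antimatroid cospanning relation satisfies R1–R4
    rintro ⟨F, hG, hU, hcos⟩
    have h0 := hG.1
    have hbas : ∀ X Y : Set E, R X Y ↔ bas F X = bas F Y := fun X Y =>
      (hcos X Y).trans (cospan_iff hG hU)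
    refine ⟨?_, ?_, ?_, ?_⟩
    · -- R1
      intro X Y h
      rw [hbas] at h ⊢
      have hsub : bas F X ⊆ bas F (X ∪ Y) := bas_mono h0 hU Set.subset_union_left
      by_contra hne
      obtain ⟨z, hz, hins⟩ := aug hG hsub (bas_isBasis h0 hU X).1 (bas_isBasis h0 hU _).1 hne
      have hzXY : z ∈ X ∪ Y := (bas_isBasis h0 hU _).2.1 hz.1
      rcases hzXY with hzX | hzY
      · have h1 : insert z (bas F X) ⊆ bas F X :=
          (bas_isBasis h0 hU X).2.2 _ hins (Set.insert_subset hzX (bas_isBasis h0 hU X).2.1)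
        exact hz.2 (h1 (Set.mem_insert z _))
      · have h1 : insert z (bas F X) ⊆ bas F Y := by
          refine (bas_isBasis h0 hU Y).2.2 _ hins ?_
          rw [h]
          exact Set.insert_subset hzY (bas_isBasis h0 hU Y).2.1
        rw [← h] at h1
        exact hz.2 (h1 (Set.mem_insert z _))
    · -- R2
      intro X Y Z hXY hYZ h
      rw [hbas] at h ⊢
      refine Set.Subset.antisymm (bas_mono h0 hU hXY) ?_
      rw [h]
      exact bas_mono h0 hU hYZ
    · -- R3
      intro X Y h
      rw [hbas] at h ⊢
      refine Set.Subset.antisymm ?_ (bas_mono h0 hU Set.inter_subset_left)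
      refine (bas_isBasis h0 hU (X ∩ Y)).2.2 _ (bas_isBasis h0 hU X).1 ?_
      refine Set.subset_inter (bas_isBasis h0 hU X).2.1 ?_
      rw [h]
      exact (bas_isBasis h0 hU Y).2.1
    · -- R4
      intro X x y hxy hxX hyX h1 _h2
      rw [hbas] at h1
      have hsub1 : bas F (insert x X) ⊆ bas F (insert x (insert y X)) :=
        bas_mono h0 hU (Set.insert_subset_insert (Set.subset_insert y X))
      have hxB : x ∉ bas F (insert y X) := by
        intro hx
        have := (bas_isBasis h0 hU (insert y X)).2.1 hx
        rcases Set.mem_insert_iff.mp this with h' | h'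
        · exact hxy h'
        · exact hxX h'
      have hxA : x ∉ bas F (insert x X) := fun hx => hxB (h1 ▸ hsub1 hx)
      have hAX : bas F (insert x X) ⊆ X := by
        intro z hz
        rcases Set.mem_insert_iff.mp ((bas_isBasis h0 hU (insert x X)).2.1 hz) with h' | h'
        · exact absurd (h' ▸ hz) hxA
        · exact h'
      refine ⟨x, Set.mem_insert x X, ?_⟩
      rw [hbas]
      have hXd : insert x X \ {x} = X := Set.insert_diff_self_of_notMem hxX
      rw [hXd]
      refine Set.Subset.antisymm (bas_mono h0 hU (Set.subset_insert x X)) ?_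
      exact (bas_isBasis h0 hU X).2.2 _ (bas_isBasis h0 hU (insert x X)).1 hAX
  · -- Backward: construct the antimatroid from R
    rintro ⟨h1, h2, h3, h4⟩
    -- build the minimum-of-class map μ
    have exmin : ∀ X : Set E, ∃ M, R X M ∧ ∀ Y, R X Y → M ⊆ Y := by
      intro X
      have hfin : {Y | R X Y}.Finite := Set.toFinite _
      have hne : {Y | R X Y}.Nonempty := ⟨X, hR.refl X⟩
      obtain ⟨M, hM, hmin⟩ := Set.Finite.exists_minimalFor Set.ncard _ hfin hne
      refine ⟨M, hM, fun Y hY => ?_⟩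
      have hMY : R M Y := hR.trans (hR.symm hM) hY
      have hint : R X (M ∩ Y) := hR.trans hM (h3 M Y hMY)
      have hle : (M ∩ Y).ncard ≤ M.ncard := Set.ncard_le_ncard Set.inter_subset_left (Set.toFinite _)
      have heq : M ∩ Y = M :=
        Set.eq_of_subset_of_ncard_le Set.inter_subset_left (hmin hint hle)
          (Set.toFinite _)
      exact Set.inter_eq_left.mp heq
    choose mu hmuR hmuMin using exmin
    have mu_sub : ∀ X, mu X ⊆ X := fun X => hmuMin X X (hR.refl X)
    have mu_congr : ∀ {X Y : Set E}, R X Y → mu X = mu Y := by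
      intro X Y h
      exact Set.Subset.antisymm (hmuMin X (mu Y) (hR.trans h (hmuR Y)))
        (hmuMin Y (mu X) (hR.trans (hR.symm h) (hmuR X)))
    have R_iff : ∀ X Y : Set E, R X Y ↔ mu X = mu Y := by
      intro X Y
      refine ⟨mu_congr, fun h => ?_⟩
      exact hR.trans (hmuR X) (hR.symm (h ▸ hmuR Y))
    set F : Set (Set E) := {S | mu S = S} with hFdef
    have memF : ∀ {S : Set E}, S ∈ F ↔ mu S = S := fun {S} => Iff.rfl
    -- a set not in F can lose a point while staying in its class
    have notF : ∀ S : Set E, mu S ≠ S → ∃ x ∈ S, R (S \ {x}) S := by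
      intro S hS
      have hsub := mu_sub S
      obtain ⟨x, hxS, hxn⟩ := Set.exists_of_ssubset (hsub.ssubset_of_ne hS)
      refine ⟨x, hxS, ?_⟩
      have hmsub : mu S ⊆ S \ {x} := by
        intro z hz
        exact ⟨hsub hz, fun h => hxn (h ▸ hz)⟩
      have h' : R (mu S) (S \ {x}) := h2 (mu S) (S \ {x}) S hmsub Set.diff_subset
        (hR.symm (hmuR S))
      exact hR.trans (hR.symm h') (hR.symm (hmuR S))
    have FnR : ∀ S : Set E, mu S = S → ∀ z ∈ S, ¬ R (S \ {z}) S := by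
      intro S hS z hz h
      have h' := mu_sub (S \ {z})
      rw [mu_congr h, hS] at h'
      exact (h' hz).2 rfl
    -- Claim C: adding a point to a feasible set stays in class or is feasible
    have claimC : ∀ S : Set E, mu S = S → ∀ y ∉ S,
        R S (insert y S) ∨ mu (insert y S) = insert y S := by
      intro S hS y hy
      by_contra hcon
      push_neg at hcon
      obtain ⟨hnR, hnF⟩ := hcon
      obtain ⟨x, hx, hRx⟩ := notF _ hnF
      rcases Set.mem_insert_iff.mp hx with rfl | hxS
      · rw [Set.insert_diff_self_of_notMem hy] at hRx
        exact hnR hRx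
      · have hxy : x ≠ y := fun h => hy (h ▸ hxS)
        have e1 : insert y (S \ {x}) = insert y S \ {x} :=
          Set.insert_diff_singleton_comm hxy.symm S
        have e2 : insert x (S \ {x}) = S := by
          rw [Set.insert_diff_singleton, Set.insert_eq_self.mpr hxS]
        have e3 : insert x (insert y (S \ {x})) = insert y S := by
          rw [Set.insert_comm, e2]
        have hx0 : x ∉ S \ {x} := fun h => h.2 rfl
        have hy0 : y ∉ S \ {x} := fun h => hy h.1
        obtain ⟨z, hz, hzR⟩ := h4 (S \ {x}) x y hxy hx0 hy0
          (by rw [e3, e1]; exact hRx) (by rw [e2, e3]; exact hnR)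
        rw [e2] at hz hzR
        exact FnR S hS z hz hzR
    have Run : ∀ S A B : Set E, R S A → R S B → R S (A ∪ B) := by
      intro S A B ha hb
      exact hR.trans ha (h1 A B (hR.trans (hR.symm ha) hb))
    have claimC2 : ∀ S Y : Set E, S ⊆ Y → (∀ y ∈ Y \ S, R S (insert y S)) → R S Y := by
      intro S Y hSY hall
      have key : ∀ T : Set E, T.Finite → T ⊆ Y \ S → R S (S ∪ T) := by
        intro T hT
        refine Set.Finite.induction_on (motive := fun T _ => T ⊆ Y \ S → R S (S ∪ T)) T hT
          (fun _ => by rw [Set.union_empty]; exact hR.refl S) ?_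
        intro a T haT hTf ih hsub
        have hT' := ih ((Set.subset_insert a T).trans hsub)
        have ha := hall a (hsub (Set.mem_insert a T))
        have hres := Run S _ _ hT' ha
        have e : (S ∪ T) ∪ insert a S = S ∪ insert a T := by
          ext z; simp only [Set.mem_union, Set.mem_insert_iff]; tauto
        rwa [e] at hres
      have := key (Y \ S) (Set.toFinite _) subset_rfl
      rwa [Set.union_diff_cancel hSY] at this
    -- Need1: a feasible subset is contained in μ of any superset
    have need1 : ∀ n : ℕ, ∀ S X : Set E, mu S = S → S ⊆ X → (X \ S).ncard ≤ n → S ⊆ mu X := by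
      intro n
      induction n with
      | zero =>
        intro S X hS hSX hc
        have hXS : X \ S = ∅ := by
          rw [← Set.ncard_eq_zero (Set.toFinite (X \ S))]
          omega
        have hXeq : X = S := Set.Subset.antisymm (Set.diff_eq_empty.mp hXS) hSX
        rw [hXeq, hS]
      | succ n ih =>
        intro S X hS hSX hc
        by_cases hex : ∃ y ∈ X \ S, mu (insert y S) = insert y S
        · obtain ⟨y, hyXS, hyF⟩ := hex
          have hsub : insert y S ⊆ X := Set.insert_subset hyXS.1 hSX
          have hcc : (X \ insert y S).ncard ≤ n := by
            have e : X \ insert y S = (X \ S) \ {y} := by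
              ext z; simp only [Set.mem_diff, Set.mem_insert_iff, Set.mem_singleton_iff]; tauto
            rw [e, Set.ncard_diff_singleton_of_mem hyXS]
            omega
          exact (Set.subset_insert y S).trans (ih _ _ hyF hsub hcc)
        · push_neg at hex
          have hall : ∀ y ∈ X \ S, R S (insert y S) := fun y hy =>
            (claimC S hS y hy.2).resolve_right (hex y hy)
          have hRSX : R S X := claimC2 S X hSX hall
          rw [← mu_congr hRSX, hS]
    have memF_need : ∀ S X : Set E, mu S = S → S ⊆ X → S ⊆ mu X := fun S X hS hSX =>
      need1 _ S X hS hSX le_rfl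
    have hUnion : ∀ A ∈ F, ∀ B ∈ F, A ∪ B ∈ F := by
      intro A hA B hB
      refine Set.Subset.antisymm (mu_sub _) (Set.union_subset ?_ ?_)
      · exact memF_need A (A ∪ B) hA Set.subset_union_left
      · exact memF_need B (A ∪ B) hB Set.subset_union_right
    have hGreedoid : IsGreedoid F := by
      constructor
      · show mu ∅ = ∅
        exact Set.Subset.antisymm (mu_sub ∅) (Set.empty_subset _)
      · intro A hA B hB hlt
        by_contra hcon
        push_neg at hcon
        have hallR : ∀ z ∈ (A ∪ B) \ B, R B (insert z B) := by
          intro z hz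
          have hzAB : z ∈ A \ B := ⟨hz.1.resolve_right hz.2, hz.2⟩
          exact (claimC B hB z hz.2).resolve_right (hcon z hzAB)
        have hRBZ : R B (A ∪ B) := claimC2 B (A ∪ B) Set.subset_union_right hallR
        have hZB : mu (A ∪ B) = B := by rw [← mu_congr hRBZ]; exact hB
        have hZF : mu (A ∪ B) = A ∪ B := hUnion A hA B hB
        have hABB : A ⊆ B := by
          have : A ∪ B = B := by rw [← hZF, hZB]
          rw [← this]; exact Set.subset_union_left
        exact absurd (Set.ncard_le_ncard hABB (Set.toFinite B)) (not_le.mpr hlt)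
    refine ⟨F, hGreedoid, hUnion, ?_⟩
    intro X Y
    have basmu : ∀ X : Set E, bas F X = mu X := by
      intro X
      refine basis_unique (bas_isBasis hGreedoid.1 hUnion X) ⟨?_, mu_sub X, ?_⟩
      · show mu (mu X) = mu X
        exact (mu_congr (hmuR X)).symm
      · intro B hB hBX
        exact memF_need B X hB hBX
    rw [cospan_iff hGreedoid hUnion, basmu, basmu]
    exact R_iff X Y
end
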